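/- arXiv:2509.11013 — 6 statements merged into one kernel-verified Lean document; each statement's English description precedes it below -/
import Mathlib

section
/- Let (Ω, ℱ, P) be a probability space, 𝒢 ⊆ ℱ a sub-σ-algebra, and Z : Ω → ℝ a P-integrable random variable. Let C be a set of 𝒢-measurable real-valued functions on Ω such that Z·g is P-integrable for every g ∈ C, and such that C is closed under 𝒢-measurable gluing: for all g, g′ ∈ C and every A ∈ 𝒢, the function 1_A·g + 1_{Aᶜ}·g′ belongs to C. Let g° ∈ C satisfy E[Z·(g − g°)] ≥ 0 for every g ∈ C. Then for every g ∈ C, E[Z ∣ 𝒢]·(g − g°) ≥ 0 P-almost surely. -/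
open MeasureTheory
open scoped Classical

/-- Localization of a stationary condition: if `C` is a decomposable class of
`𝒢`-measurable functions and `E[Z·(g − g°)] ≥ 0` for all `g ∈ C`, then
`E[Z|𝒢]·(g − g°) ≥ 0` almost surely, for every `g ∈ C`. -/
theorem stmt_5 {Ω : Type*} {m0 : MeasurableSpace Ω} (P : Measure Ω) [IsProbabilityMeasure P]
    (G : MeasurableSpace Ω) (hG : G ≤ m0)
    (Z : Ω → ℝ) (hZ : Integrable Z P)
    (C : Set (Ω → ℝ))
    (hCmeas : ∀ g ∈ C, StronglyMeasurable[G] g)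
    (hCint : ∀ g ∈ C, Integrable (fun ω => Z ω * g ω) P)
    (hCglue : ∀ g ∈ C, ∀ g' ∈ C, ∀ A : Set Ω, MeasurableSet[G] A →
      (fun ω => if ω ∈ A then g ω else g' ω) ∈ C)
    (go : Ω → ℝ) (hgo : go ∈ C)
    (hstat : ∀ g ∈ C, 0 ≤ ∫ ω, Z ω * (g ω - go ω) ∂P) :
    ∀ g ∈ C, ∀ᵐ ω ∂P, 0 ≤ (P[Z|G]) ω * (g ω - go ω) := by
  intro g hg
  haveI : SigmaFinite (P.trim hG) := by
    haveI : IsFiniteMeasure (P.trim hG) := isFiniteMeasure_trim hG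
    infer_instance
  set f : Ω → ℝ := fun ω => g ω - go ω with hfdef
  have hfG : StronglyMeasurable[G] f := (hCmeas g hg).sub (hCmeas go hgo)
  -- the bad set
  set A : Set Ω := {ω | (P[Z|G]) ω * f ω < 0} with hAdef
  have hAmeas : MeasurableSet[G] A := by
    have : StronglyMeasurable[G] (fun ω => (P[Z|G]) ω * f ω) :=
      stronglyMeasurable_condExp.mul hfG
    exact this.measurable measurableSet_Iio
  -- glued function
  have hh : (fun ω => if ω ∈ A then g ω else go ω) ∈ C :=
    hCglue g hg go hgo A hAmeas
  set φ : Ω → ℝ := A.indicator f with hφdef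
  have hφG : StronglyMeasurable[G] φ := hfG.indicator hAmeas
  have hdiff : ∀ ω, (if ω ∈ A then g ω else go ω) - go ω = φ ω := by
    intro ω
    by_cases hω : ω ∈ A <;> simp [hφdef, Set.indicator, hω, hfdef]
  have hZφ : Integrable (fun ω => φ ω * Z ω) P := by
    have h1 : Integrable (fun ω => Z ω * f ω) P := by
      have := (hCint g hg).sub (hCint go hgo)
      simpa [hfdef, mul_sub, Pi.sub_def] using this
    have h2 : (fun ω => φ ω * Z ω) = A.indicator (fun ω => Z ω * f ω) := by
      funext ω
      by_cases hω : ω ∈ A <;> simp [hφdef, Set.indicator, hω, mul_comm]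
    rw [h2]
    have hAm0 : MeasurableSet[m0] A := hG A hAmeas
    exact h1.indicator hAm0
  -- stationarity applied to the glued function
  have hstat' : 0 ≤ ∫ ω, φ ω * Z ω ∂P := by
    have := hstat _ hh
    have heq : (fun ω => Z ω * ((if ω ∈ A then g ω else go ω) - go ω))
        = fun ω => φ ω * Z ω := by
      funext ω; rw [hdiff ω, mul_comm]
    rwa [heq] at this
  -- pull-out property
  have hpull : P[fun ω => φ ω * Z ω|G] =ᵐ[P] fun ω => φ ω * (P[Z|G]) ω := by
    have := condExp_mul_of_stronglyMeasurable_left (μ := P) hφG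
      (by simpa [Pi.mul_def] using hZφ) hZ
    simpa [Pi.mul_def] using this
  have hint_eq : ∫ ω, φ ω * Z ω ∂P = ∫ ω, φ ω * (P[Z|G]) ω ∂P := by
    rw [← integral_condExp (μ := P) (f := fun ω => φ ω * Z ω) hG]
    exact integral_congr_ae hpull
  -- the function φ * E[Z|G] is nonpositive
  have hFnonpos : ∀ ω, φ ω * (P[Z|G]) ω ≤ 0 := by
    intro ω
    by_cases hω : ω ∈ A
    · have : (P[Z|G]) ω * f ω < 0 := hω
      simp only [hφdef, Set.indicator_of_mem hω]
      nlinarith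
    · simp [hφdef, Set.indicator_of_notMem hω]
  have hFint : Integrable (fun ω => φ ω * (P[Z|G]) ω) P :=
    (integrable_condExp (f := fun ω => φ ω * Z ω)).congr hpull
  -- so its integral is both ≥ 0 and ≤ 0, hence the function is 0 a.e.
  have hzero : (fun ω => -(φ ω * (P[Z|G]) ω)) =ᵐ[P] 0 := by
    rw [← integral_eq_zero_iff_of_nonneg (fun ω => neg_nonneg.mpr (hFnonpos ω)) hFint.neg]
    have h1 : ∫ ω, -(φ ω * (P[Z|G]) ω) ∂P = -∫ ω, φ ω * (P[Z|G]) ω ∂P :=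
      integral_neg _
    have h2 : 0 ≤ ∫ ω, φ ω * (P[Z|G]) ω ∂P := hint_eq ▸ hstat'
    have h3 : ∫ ω, φ ω * (P[Z|G]) ω ∂P ≤ 0 :=
      integral_nonpos hFnonpos
    rw [h1]; linarith
  filter_upwards [hzero] with ω hω
  simp only [Pi.zero_apply, neg_eq_zero] at hω
  by_contra hcon
  push_neg at hcon
  have hωA : ω ∈ A := hcon
  have hcon' : (P[Z|G]) ω * f ω < 0 := hcon
  rw [hφdef, Set.indicator_of_mem hωA, mul_comm] at hω
  linarith
end

section
/- Let K ∈ ℕ and for each k ∈ {1, …, K} let E_k be a real normed vector space and U_k ⊆ E_k a convex set; let E := E_1 × ⋯ × E_K with the product norm and S := U_1 × ⋯ × U_K ⊆ E. Let J : E → ℝ be convex on S and Fréchet-differentiable at a point γ° = (γ°_1, …, γ°_K) ∈ S with derivative D (a continuous linear functional on E). Suppose that for every k and every x ∈ U_k, D(e_k(x − γ°_k)) ≥ 0, where e_k : E_k → E places its argument in the k-th coordinate and zero in all other coordinates. Then J(γ°) ≤ J(γ) for every γ ∈ S; that is, person-by-person stationarity together with convexity of J implies global (team) optimality. -/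
/-- Person-by-person stationarity plus convexity of the payoff implies global (team)
optimality: if `J` is convex on `S = U₁ × ⋯ × U_K`, Fréchet-differentiable at `γ° ∈ S`
with derivative `D`, and `D` is nonnegative in every admissible single-coordinate
direction, then `γ°` is a global minimizer of `J` on `S`. -/
theorem stmt_6 {K : ℕ} {E : Fin K → Type*} [∀ k, NormedAddCommGroup (E k)]
    [∀ k, NormedSpace ℝ (E k)] (U : ∀ k, Set (E k)) (hU : ∀ k, Convex ℝ (U k))
    (S : Set (∀ k, E k)) (hS : S = Set.univ.pi U)
    (J : (∀ k, E k) → ℝ) (hJconv : ConvexOn ℝ S J)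
    (γo : ∀ k, E k) (hγo : γo ∈ S)
    (D : (∀ k, E k) →L[ℝ] ℝ) (hdiff : HasFDerivAt J D γo)
    (hstat : ∀ k, ∀ x ∈ U k, 0 ≤ D (Pi.single k (x - γo k))) :
    ∀ γ ∈ S, J γo ≤ J γ := by
  intro γ hγ
  set v := γ - γo with hv
  -- Step 1: 0 ≤ D v via coordinate decomposition
  have hsum : (∑ k, Pi.single k (v k)) = v := Finset.univ_sum_single v
  have hDv : 0 ≤ D v := by
    rw [← hsum, map_sum]
    apply Finset.sum_nonneg
    intro k _
    have hγk : γ k ∈ U k := by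
      rw [hS] at hγ; exact hγ k (Set.mem_univ k)
    have := hstat k (γ k) hγk
    simpa [hv, Pi.sub_apply] using this
  -- Step 2: gradient inequality D v ≤ J γ - J γo
  have hline : ∀ t : ℝ, HasDerivAt (fun t : ℝ => γo + t • v) v t := by
    intro t
    simpa using ((hasDerivAt_id t).smul_const v).const_add γo
  have hcomp : HasDerivAt (fun t : ℝ => J (γo + t • v)) (D v) 0 := by
    have hd : HasFDerivAt J D (γo + (0:ℝ) • v) := by simpa using hdiff
    exact hd.comp_hasDerivAt 0 (hline 0)
  have hslope : Filter.Tendsto (slope (fun t : ℝ => J (γo + t • v)) 0) (nhdsWithin 0 (Set.Ioi 0))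
      (nhds (D v)) := by
    have := hasDerivAt_iff_tendsto_slope.mp hcomp
    exact this.mono_left (nhdsWithin_mono _ (fun t ht => ne_of_gt ht))
  have hbound : ∀ᶠ t in nhdsWithin (0:ℝ) (Set.Ioi 0),
      slope (fun t : ℝ => J (γo + t • v)) 0 t ≤ J γ - J γo := by
    filter_upwards [self_mem_nhdsWithin,
      Ioo_mem_nhdsGT_of_mem (Set.mem_Ico.mpr ⟨le_refl (0:ℝ), one_pos⟩)] with t ht ht1
    have ht0 : 0 < t := ht
    have ht1' : t ≤ 1 := le_of_lt ht1.2
    have hconv := hJconv.2 hγo hγ (show (0:ℝ) ≤ 1 - t by linarith) ht0.le (by ring)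
    have heq : (1 - t) • γo + t • γ = γo + t • v := by
      simp [hv]; module
    rw [heq] at hconv
    have h2 : J (γo + t • v) ≤ (1 - t) * J γo + t * J γ := by
      simpa [smul_eq_mul] using hconv
    rw [slope_def_field]
    simp only [zero_smul, add_zero, sub_zero]
    rw [div_le_iff₀ ht0]
    nlinarith
  have hle : D v ≤ J γ - J γo :=
    le_of_tendsto hslope hbound
  linarith
end

section
/- Let σ > 0, let μ be a probability measure on ℝ, and let g : ℝ → ℝ be Borel measurable with ∫ g(ξ)² dμ(ξ) < ∞. On the probability space (ℝ², Borel, μ ⊗ N(0, σ²)) define X(x, v) := x, V(x, v) := v and Y := g(X) + V. Define h : ℝ → ℝ by h(y) := [∫ g(ξ)·exp(−(y − g(ξ))²/(2σ²)) dμ(ξ)] / [∫ exp(−(y − g(ξ))²/(2σ²)) dμ(ξ)]. Then h(Y) is a version of the conditional expectation of g(X) given the σ-algebra generated by Y; that is, E[g(X) ∣ σ(Y)] = h(Y) almost surely. -/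
open MeasureTheory ProbabilityTheory

open scoped ENNReal NNReal
section AuxWitsenhausen

lemma aux_hV0 {σ : ℝ} (hσ : 0 < σ) : (⟨σ ^ 2, sq_nonneg σ⟩ : NNReal) ≠ 0 :=
  fun h => (pow_pos hσ 2).ne' (congrArg NNReal.toReal h)

lemma aux_map (σ : ℝ) (hσ : 0 < σ) (μ : Measure ℝ) [SigmaFinite μ]
    (g : ℝ → ℝ) (hg : Measurable g) :
    (μ.prod (gaussianReal 0 ⟨σ ^ 2, sq_nonneg σ⟩)).map (fun p : ℝ × ℝ => (p.1, g p.1 + p.2))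
      = (μ.prod volume).withDensity
        (fun q => ENNReal.ofReal (gaussianPDFReal 0 ⟨σ ^ 2, sq_nonneg σ⟩ (q.2 - g q.1))) := by
  set V : NNReal := ⟨σ ^ 2, sq_nonneg σ⟩ with hVdef
  have hV0 : V ≠ 0 := aux_hV0 hσ
  have hT : Measurable (fun p : ℝ × ℝ => (p.1, g p.1 + p.2)) :=
    measurable_fst.prodMk ((hg.comp measurable_fst).add measurable_snd)
  have hW : Measurable (fun q : ℝ × ℝ => ENNReal.ofReal (gaussianPDFReal 0 V (q.2 - g q.1))) :=
    (((measurable_gaussianPDFReal 0 V).comp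
      (measurable_snd.sub (hg.comp measurable_fst))).ennreal_ofReal)
  ext s hs
  rw [Measure.map_apply hT hs, gaussianReal_of_var_ne_zero 0 hV0,
    Measure.prod_apply (hT hs), withDensity_apply _ hs,
    ← lintegral_indicator hs _, lintegral_prod _ ((hW.indicator hs).aemeasurable)]
  refine lintegral_congr fun x => ?_
  have hsx : MeasurableSet ((fun v : ℝ => (x, g x + v)) ⁻¹' s) :=
    (measurable_const.prodMk (measurable_id.const_add (g x))) hs
  have : Prod.mk x ⁻¹' ((fun p : ℝ × ℝ => (p.1, g p.1 + p.2)) ⁻¹' s)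
      = (fun v : ℝ => (x, g x + v)) ⁻¹' s := rfl
  rw [this, withDensity_apply _ hsx, ← lintegral_indicator hsx _]
  have key : ∀ v : ℝ, Set.indicator ((fun v : ℝ => (x, g x + v)) ⁻¹' s) (gaussianPDF 0 V) v
      = Set.indicator s (fun q : ℝ × ℝ => ENNReal.ofReal (gaussianPDFReal 0 V (q.2 - g q.1)))
          (x, g x + v) := by
    intro v
    by_cases hv : (x, g x + v) ∈ s <;> simp [Set.indicator_apply, hv, gaussianPDF, add_sub_cancel_left]
  calc ∫⁻ v, Set.indicator ((fun v : ℝ => (x, g x + v)) ⁻¹' s) (gaussianPDF 0 V) v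
      = ∫⁻ v, Set.indicator s
          (fun q : ℝ × ℝ => ENNReal.ofReal (gaussianPDFReal 0 V (q.2 - g q.1))) (x, g x + v) := by
        exact lintegral_congr key
    _ = ∫⁻ y, Set.indicator s
          (fun q : ℝ × ℝ => ENNReal.ofReal (gaussianPDFReal 0 V (q.2 - g q.1))) (x, y) := by
        exact lintegral_add_left_eq_self
          (fun y => Set.indicator s
            (fun q : ℝ × ℝ => ENNReal.ofReal (gaussianPDFReal 0 V (q.2 - g q.1))) (x, y)) (g x)


lemma aux_gpdf_eq {σ : ℝ} (z : ℝ) :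
    gaussianPDFReal 0 ⟨σ ^ 2, sq_nonneg σ⟩ z
      = (Real.sqrt (2 * Real.pi * σ ^ 2))⁻¹ * Real.exp (-z ^ 2 / (2 * σ ^ 2)) := by
  simp [gaussianPDFReal]
  rfl

lemma aux_gpdf_le {σ : ℝ} (z : ℝ) :
    gaussianPDFReal 0 ⟨σ ^ 2, sq_nonneg σ⟩ z ≤ (Real.sqrt (2 * Real.pi * σ ^ 2))⁻¹ := by
  rw [aux_gpdf_eq]
  have h1 : Real.exp (-z ^ 2 / (2 * σ ^ 2)) ≤ 1 :=
    Real.exp_le_one_iff.mpr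
      (div_nonpos_of_nonpos_of_nonneg (neg_nonpos.mpr (sq_nonneg z)) (by positivity))
  have h2 : (0:ℝ) ≤ (Real.sqrt (2 * Real.pi * σ ^ 2))⁻¹ := by positivity
  nlinarith

lemma aux_intG {σ : ℝ} (hσ : 0 < σ) (μ : Measure ℝ) [IsProbabilityMeasure μ]
    (g : ℝ → ℝ) (hg : Measurable g) (f : ℝ → ℝ) (hf : Measurable f) (hfi : Integrable f μ) :
    Integrable (fun q : ℝ × ℝ => f q.1 * gaussianPDFReal 0 ⟨σ ^ 2, sq_nonneg σ⟩ (q.2 - g q.1))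
      (μ.prod volume) := by
  set V : NNReal := ⟨σ ^ 2, sq_nonneg σ⟩ with hVdef
  have hV0 : V ≠ 0 := fun h => (pow_pos hσ 2).ne' (congrArg NNReal.toReal h)
  have hmeas : AEStronglyMeasurable
      (fun q : ℝ × ℝ => f q.1 * gaussianPDFReal 0 V (q.2 - g q.1)) (μ.prod volume) :=
    ((hf.comp measurable_fst).mul ((measurable_gaussianPDFReal 0 V).comp
      (measurable_snd.sub (hg.comp measurable_fst)))).aestronglyMeasurable
  rw [integrable_prod_iff hmeas]
  constructor
  · refine ae_of_all _ fun x => ?_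
    exact ((integrable_gaussianPDFReal 0 V).comp_sub_right (g x)).const_mul (f x)
  · have : ∀ x : ℝ, (∫ y, ‖f x * gaussianPDFReal 0 V (y - g x)‖) = |f x| := by
      intro x
      have h1 : ∀ y : ℝ, ‖f x * gaussianPDFReal 0 V (y - g x)‖
          = |f x| * gaussianPDFReal 0 V (y - g x) := by
        intro y
        rw [norm_mul, Real.norm_eq_abs, Real.norm_eq_abs,
          abs_of_nonneg (gaussianPDFReal_nonneg 0 V _)]
      simp_rw [h1]
      rw [integral_const_mul, integral_sub_right_eq_self (gaussianPDFReal 0 V) (g x),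
        integral_gaussianPDFReal_eq_one 0 hV0, mul_one]
    simp_rw [this]
    exact hfi.abs


variable {σ : ℝ} (hσ : 0 < σ) (μ : Measure ℝ) [IsProbabilityMeasure μ]
  (g : ℝ → ℝ) (hg : Measurable g)

include hσ hg

lemma aux_K_int (y : ℝ) :
    Integrable (fun x => Real.exp (-(y - g x) ^ 2 / (2 * σ ^ 2))) μ := by
  refine Integrable.mono (integrable_const (1:ℝ))
    ((Real.measurable_exp.comp (((measurable_const.sub hg).pow_const 2).neg.div_const _)).aestronglyMeasurable)
    (ae_of_all _ fun x => ?_)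
  rw [Real.norm_eq_abs, abs_of_nonneg (Real.exp_pos _).le, norm_one]
  exact Real.exp_le_one_iff.mpr
    (div_nonpos_of_nonpos_of_nonneg (neg_nonpos.mpr (sq_nonneg _)) (by positivity))

lemma aux_Dpos (y : ℝ) : 0 < ∫ x, Real.exp (-(y - g x) ^ 2 / (2 * σ ^ 2)) ∂μ := by
  rw [integral_pos_iff_support_of_nonneg (fun x => (Real.exp_pos _).le) (aux_K_int hσ μ g hg y)]
  have : (Function.support fun x => Real.exp (-(y - g x) ^ 2 / (2 * σ ^ 2))) = Set.univ :=
    Set.eq_univ_iff_forall.mpr fun x => (Real.exp_pos _).ne'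
  rw [this]
  simp

lemma aux_gK_int (hg1 : Integrable g μ) (y : ℝ) :
    Integrable (fun x => g x * Real.exp (-(y - g x) ^ 2 / (2 * σ ^ 2))) μ := by
  refine Integrable.mono hg1
    ((hg.mul (Real.measurable_exp.comp
      (((measurable_const.sub hg).pow_const 2).neg.div_const _))).aestronglyMeasurable)
    (ae_of_all _ fun x => ?_)
  rw [Real.norm_eq_abs, Real.norm_eq_abs, abs_mul, abs_of_nonneg (Real.exp_pos _).le]
  calc |g x| * Real.exp (-(y - g x) ^ 2 / (2 * σ ^ 2)) ≤ |g x| * 1 := by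
        refine mul_le_mul_of_nonneg_left ?_ (abs_nonneg _)
        exact Real.exp_le_one_iff.mpr
          (div_nonpos_of_nonpos_of_nonneg (neg_nonpos.mpr (sq_nonneg _)) (by positivity))
    _ = |g x| := mul_one _

lemma aux_h_meas (h : ℝ → ℝ)
    (hh : ∀ y, h y = (∫ ξ, g ξ * Real.exp (-(y - g ξ) ^ 2 / (2 * σ ^ 2)) ∂μ)
        / (∫ ξ, Real.exp (-(y - g ξ) ^ 2 / (2 * σ ^ 2)) ∂μ)) :
    Measurable h := by
  have hKm : StronglyMeasurable (fun q : ℝ × ℝ => Real.exp (-(q.1 - g q.2) ^ 2 / (2 * σ ^ 2))) :=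
    (Real.measurable_exp.comp
      (((measurable_fst.sub (hg.comp measurable_snd)).pow_const 2).neg.div_const _)).stronglyMeasurable
  have hgKm : StronglyMeasurable (fun q : ℝ × ℝ => g q.2 * Real.exp (-(q.1 - g q.2) ^ 2 / (2 * σ ^ 2))) :=
    ((hg.comp measurable_snd).stronglyMeasurable.mul hKm)
  have hN : Measurable (fun y => ∫ x, g x * Real.exp (-(y - g x) ^ 2 / (2 * σ ^ 2)) ∂μ) :=
    hgKm.integral_prod_right'.measurable
  have hD : Measurable (fun y => ∫ x, Real.exp (-(y - g x) ^ 2 / (2 * σ ^ 2)) ∂μ) :=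
    hKm.integral_prod_right'.measurable
  have : h = fun y => (∫ x, g x * Real.exp (-(y - g x) ^ 2 / (2 * σ ^ 2)) ∂μ)
      / (∫ x, Real.exp (-(y - g x) ^ 2 / (2 * σ ^ 2)) ∂μ) := funext hh
  rw [this]
  exact hN.div hD

lemma aux_id (h : ℝ → ℝ)
    (hh : ∀ y, h y = (∫ ξ, g ξ * Real.exp (-(y - g ξ) ^ 2 / (2 * σ ^ 2)) ∂μ)
        / (∫ ξ, Real.exp (-(y - g ξ) ^ 2 / (2 * σ ^ 2)) ∂μ)) (y : ℝ) :
    h y * ∫ x, gaussianPDFReal 0 ⟨σ ^ 2, sq_nonneg σ⟩ (y - g x) ∂μ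
      = ∫ x, g x * gaussianPDFReal 0 ⟨σ ^ 2, sq_nonneg σ⟩ (y - g x) ∂μ := by
  have e1 : ∫ x, gaussianPDFReal 0 ⟨σ ^ 2, sq_nonneg σ⟩ (y - g x) ∂μ
      = (Real.sqrt (2 * Real.pi * σ ^ 2))⁻¹ * ∫ x, Real.exp (-(y - g x) ^ 2 / (2 * σ ^ 2)) ∂μ := by
    simp_rw [aux_gpdf_eq]
    rw [integral_const_mul]
  have e2 : ∫ x, g x * gaussianPDFReal 0 ⟨σ ^ 2, sq_nonneg σ⟩ (y - g x) ∂μ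
      = (Real.sqrt (2 * Real.pi * σ ^ 2))⁻¹ * ∫ x, g x * Real.exp (-(y - g x) ^ 2 / (2 * σ ^ 2)) ∂μ := by
    rw [← integral_const_mul]
    refine integral_congr_ae (ae_of_all _ fun x => ?_)
    simp only [aux_gpdf_eq]
    ring
  rw [e1, e2, hh y]
  have hD := (aux_Dpos hσ μ g hg y).ne'
  field_simp
  exact mul_div_cancel_right₀ _ (by simpa [neg_div] using hD)

lemma aux_intH (hg1 : Integrable g μ) (h : ℝ → ℝ)
    (hh : ∀ y, h y = (∫ ξ, g ξ * Real.exp (-(y - g ξ) ^ 2 / (2 * σ ^ 2)) ∂μ)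
        / (∫ ξ, Real.exp (-(y - g ξ) ^ 2 / (2 * σ ^ 2)) ∂μ)) :
    Integrable (fun q : ℝ × ℝ => h q.2 * gaussianPDFReal 0 ⟨σ ^ 2, sq_nonneg σ⟩ (q.2 - g q.1))
      (μ.prod volume) := by
  set V : NNReal := ⟨σ ^ 2, sq_nonneg σ⟩ with hVdef
  have hmh : Measurable h := aux_h_meas hσ μ g hg h hh
  have hwm : Measurable (fun q : ℝ × ℝ => gaussianPDFReal 0 V (q.1 - g q.2)) :=
    (measurable_gaussianPDFReal 0 V).comp (measurable_fst.sub (hg.comp measurable_snd))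
  have J : Integrable (fun q : ℝ × ℝ => h q.1 * gaussianPDFReal 0 V (q.1 - g q.2))
      (volume.prod μ) := by
    have hmeasJ : AEStronglyMeasurable
        (fun q : ℝ × ℝ => h q.1 * gaussianPDFReal 0 V (q.1 - g q.2)) (volume.prod μ) :=
      ((hmh.comp measurable_fst).mul hwm).aestronglyMeasurable
    rw [integrable_prod_iff hmeasJ]
    constructor
    · refine ae_of_all _ fun y => ?_
      refine Integrable.const_mul ?_ (h y)
      refine Integrable.mono (integrable_const ((Real.sqrt (2 * Real.pi * σ ^ 2))⁻¹))
        (((measurable_gaussianPDFReal 0 V).comp (measurable_const.sub hg)).aestronglyMeasurable)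
        (ae_of_all _ fun x => ?_)
      rw [Real.norm_eq_abs, abs_of_nonneg (gaussianPDFReal_nonneg 0 V _), Real.norm_eq_abs]
      exact (aux_gpdf_le _).trans (le_abs_self _)
    · have hBint : Integrable (fun y => ∫ x, |g x| * gaussianPDFReal 0 V (y - g x) ∂μ) volume := by
        have := (aux_intG hσ μ g hg (fun x => |g x|) hg.abs hg1.abs).swap
        simpa [Function.comp] using this.integral_prod_left
      refine Integrable.mono hBint ?_ (ae_of_all _ fun y => ?_)
      · exact (((hmh.comp measurable_fst).mul hwm).stronglyMeasurable.norm.integral_prod_right').aestronglyMeasurable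
      · have e1 : ∫ x, ‖h y * gaussianPDFReal 0 V (y - g x)‖ ∂μ
            = |h y| * ∫ x, gaussianPDFReal 0 V (y - g x) ∂μ := by
          rw [← integral_const_mul]
          refine integral_congr_ae (ae_of_all _ fun x => ?_)
          simp only [norm_mul, Real.norm_eq_abs]
          rw [abs_of_nonneg (gaussianPDFReal_nonneg 0 V _)]
        have hDnn : 0 ≤ ∫ x, gaussianPDFReal 0 V (y - g x) ∂μ :=
          integral_nonneg fun x => gaussianPDFReal_nonneg 0 V _
        have e2 : |h y| * ∫ x, gaussianPDFReal 0 V (y - g x) ∂μ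
            = |∫ x, g x * gaussianPDFReal 0 V (y - g x) ∂μ| := by
          rw [← abs_of_nonneg hDnn, ← abs_mul, aux_id hσ μ g hg h hh y]
        have e3 : |∫ x, g x * gaussianPDFReal 0 V (y - g x) ∂μ|
            ≤ ∫ x, |g x| * gaussianPDFReal 0 V (y - g x) ∂μ := by
          calc |∫ x, g x * gaussianPDFReal 0 V (y - g x) ∂μ|
              ≤ ∫ x, |g x * gaussianPDFReal 0 V (y - g x)| ∂μ := by
                have := norm_integral_le_integral_norm
                  (μ := μ) (fun x => g x * gaussianPDFReal 0 V (y - g x))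
                simpa only [Real.norm_eq_abs] using this
            _ = ∫ x, |g x| * gaussianPDFReal 0 V (y - g x) ∂μ := by
                refine integral_congr_ae (ae_of_all _ fun x => ?_)
                simp only [abs_mul]
                rw [abs_of_nonneg (gaussianPDFReal_nonneg 0 V _)]
        rw [Real.norm_eq_abs, Real.norm_eq_abs, abs_of_nonneg
            (integral_nonneg fun x => norm_nonneg _),
          abs_of_nonneg (integral_nonneg fun x =>
            mul_nonneg (abs_nonneg _) (gaussianPDFReal_nonneg 0 V _))]
        rw [e1]
        exact e2.le.trans e3
  have := J.swap
  exact this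

section Transfer

lemma aux_transfer_int (F : ℝ × ℝ → ℝ) (hF : Measurable F) :
    Integrable (fun p : ℝ × ℝ => F (p.1, g p.1 + p.2))
        (μ.prod (gaussianReal 0 ⟨σ ^ 2, sq_nonneg σ⟩))
      ↔ Integrable (fun q : ℝ × ℝ => F q * gaussianPDFReal 0 ⟨σ ^ 2, sq_nonneg σ⟩ (q.2 - g q.1))
        (μ.prod volume) := by
  set V : NNReal := ⟨σ ^ 2, sq_nonneg σ⟩ with hVdef
  have hT : Measurable (fun p : ℝ × ℝ => (p.1, g p.1 + p.2)) :=
    measurable_fst.prodMk ((hg.comp measurable_fst).add measurable_snd)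
  have hwm : Measurable (fun q : ℝ × ℝ => gaussianPDFReal 0 V (q.2 - g q.1)) :=
    (measurable_gaussianPDFReal 0 V).comp (measurable_snd.sub (hg.comp measurable_fst))
  have h1 : Integrable (fun p : ℝ × ℝ => F (p.1, g p.1 + p.2))
        (μ.prod (gaussianReal 0 V))
      ↔ Integrable F ((μ.prod (gaussianReal 0 V)).map (fun p : ℝ × ℝ => (p.1, g p.1 + p.2))) :=
    (integrable_map_measure hF.aestronglyMeasurable hT.aemeasurable).symm
  rw [h1, aux_map σ hσ μ g hg,
    integrable_withDensity_iff hwm.ennreal_ofReal (ae_of_all _ fun q => ENNReal.ofReal_lt_top)]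
  exact integrable_congr (ae_of_all _ fun q => by
    show F q * (ENNReal.ofReal (gaussianPDFReal 0 V (q.2 - g q.1))).toReal
      = F q * gaussianPDFReal 0 V (q.2 - g q.1)
    rw [ENNReal.toReal_ofReal (gaussianPDFReal_nonneg 0 V _)])

lemma aux_transfer_eq (F : ℝ × ℝ → ℝ) (hF : Measurable F) :
    ∫ p, F (p.1, g p.1 + p.2) ∂(μ.prod (gaussianReal 0 ⟨σ ^ 2, sq_nonneg σ⟩))
      = ∫ q, F q * gaussianPDFReal 0 ⟨σ ^ 2, sq_nonneg σ⟩ (q.2 - g q.1) ∂(μ.prod volume) := by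
  set V : NNReal := ⟨σ ^ 2, sq_nonneg σ⟩ with hVdef
  have hT : Measurable (fun p : ℝ × ℝ => (p.1, g p.1 + p.2)) :=
    measurable_fst.prodMk ((hg.comp measurable_fst).add measurable_snd)
  have hwm : Measurable (fun q : ℝ × ℝ => (gaussianPDFReal 0 V (q.2 - g q.1)).toNNReal) :=
    ((measurable_gaussianPDFReal 0 V).comp
      (measurable_snd.sub (hg.comp measurable_fst))).real_toNNReal
  have h1 : ∫ p, F (p.1, g p.1 + p.2) ∂(μ.prod (gaussianReal 0 V))
      = ∫ q, F q ∂((μ.prod (gaussianReal 0 V)).map (fun p : ℝ × ℝ => (p.1, g p.1 + p.2))) :=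
    (integral_map hT.aemeasurable hF.aestronglyMeasurable).symm
  rw [h1, aux_map σ hσ μ g hg]
  have h2 : (μ.prod volume).withDensity
        (fun q : ℝ × ℝ => ENNReal.ofReal (gaussianPDFReal 0 V (q.2 - g q.1)))
      = (μ.prod volume).withDensity
        (fun q : ℝ × ℝ => ((gaussianPDFReal 0 V (q.2 - g q.1)).toNNReal : ℝ≥0∞)) := rfl
  rw [h2, integral_withDensity_eq_integral_smul hwm F]
  refine integral_congr_ae (ae_of_all _ fun q => ?_)
  simp only [NNReal.smul_def, Real.coe_toNNReal _ (gaussianPDFReal_nonneg 0 V _), smul_eq_mul]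
  ring

end Transfer

end AuxWitsenhausen

/-- Bayes formula for the Witsenhausen counterexample: with `X ∼ μ`, `V ∼ N(0,σ²)`
independent and `Y = g(X) + V`, the function
`h(y) = (∫ g(ξ) exp(−(y−g(ξ))²/(2σ²)) dμ(ξ)) / (∫ exp(−(y−g(ξ))²/(2σ²)) dμ(ξ))`
composed with `Y` is a version of `E[g(X) | σ(Y)]`. -/
theorem stmt_11 (σ : ℝ) (hσ : 0 < σ) (μ : Measure ℝ) [IsProbabilityMeasure μ]
    (g : ℝ → ℝ) (hg : Measurable g) (hg2 : Integrable (fun ξ => g ξ ^ 2) μ)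
    (P : Measure (ℝ × ℝ)) (hP : P = μ.prod (gaussianReal 0 ⟨σ ^ 2, sq_nonneg σ⟩))
    (X : ℝ × ℝ → ℝ) (hX : ∀ p, X p = p.1)
    (Y : ℝ × ℝ → ℝ) (hY : ∀ p, Y p = g p.1 + p.2)
    (h : ℝ → ℝ)
    (hh : ∀ y, h y = (∫ ξ, g ξ * Real.exp (-(y - g ξ) ^ 2 / (2 * σ ^ 2)) ∂μ)
        / (∫ ξ, Real.exp (-(y - g ξ) ^ 2 / (2 * σ ^ 2)) ∂μ)) :
    P[fun p => g (X p)|MeasurableSpace.comap Y (inferInstance : MeasurableSpace ℝ)]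
      =ᵐ[P] fun p => h (Y p) := by
  subst hP
  have hXf : X = fun p : ℝ × ℝ => p.1 := funext hX
  have hYf : Y = fun p : ℝ × ℝ => g p.1 + p.2 := funext hY
  subst hXf hYf
  have hg1 : Integrable g μ := by
    refine Integrable.mono (hg2.add (integrable_const 1)) hg.aestronglyMeasurable
      (ae_of_all _ fun x => ?_)
    simp only [Pi.add_apply, Real.norm_eq_abs]
    rw [abs_of_nonneg (by positivity : (0:ℝ) ≤ g x ^ 2 + 1)]
    nlinarith [sq_nonneg (|g x| - 1), sq_abs (g x), abs_nonneg (g x)]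
  have hYmeas : Measurable (fun p : ℝ × ℝ => g p.1 + p.2) :=
    (hg.comp measurable_fst).add measurable_snd
  have hm : MeasurableSpace.comap (fun p : ℝ × ℝ => g p.1 + p.2)
        (inferInstance : MeasurableSpace ℝ)
      ≤ (inferInstance : MeasurableSpace (ℝ × ℝ)) := hYmeas.comap_le
  have hmh : Measurable h := aux_h_meas hσ μ g hg h hh
  have hintH : Integrable
      (fun q : ℝ × ℝ => h q.2 * gaussianPDFReal 0 ⟨σ ^ 2, sq_nonneg σ⟩ (q.2 - g q.1))
      (μ.prod volume) := aux_intH hσ μ g hg hg1 h hh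
  have hintG : Integrable
      (fun q : ℝ × ℝ => g q.1 * gaussianPDFReal 0 ⟨σ ^ 2, sq_nonneg σ⟩ (q.2 - g q.1))
      (μ.prod volume) := aux_intG hσ μ g hg g hg hg1
  have hGP : Integrable (fun p : ℝ × ℝ => g p.1) (μ.prod (gaussianReal 0 ⟨σ ^ 2, sq_nonneg σ⟩)) :=
    (aux_transfer_int hσ μ g hg (fun q => g q.1) (hg.comp measurable_fst)).mpr hintG
  have hHP : Integrable (fun p : ℝ × ℝ => h (g p.1 + p.2))
      (μ.prod (gaussianReal 0 ⟨σ ^ 2, sq_nonneg σ⟩)) :=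
    (aux_transfer_int hσ μ g hg (fun q => h q.2) (hmh.comp measurable_snd)).mpr hintH
  haveI := instIsProbabilityMeasureGaussianReal 0 ⟨σ ^ 2, sq_nonneg σ⟩
  refine (ae_eq_condExp_of_forall_setIntegral_eq hm hGP
    (fun s _ _ => hHP.integrableOn) ?_ ?_).symm
  · intro s hs _
    obtain ⟨t, ht, rfl⟩ := hs
    have hind2 : ∫ p in (fun p : ℝ × ℝ => g p.1 + p.2) ⁻¹' t,
          h (g p.1 + p.2) ∂(μ.prod (gaussianReal 0 ⟨σ ^ 2, sq_nonneg σ⟩))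
        = ∫ p, (fun q : ℝ × ℝ => Set.indicator t (fun _ => (1:ℝ)) q.2 * h q.2)
            (p.1, g p.1 + p.2) ∂(μ.prod (gaussianReal 0 ⟨σ ^ 2, sq_nonneg σ⟩)) := by
      rw [← integral_indicator (hYmeas ht)]
      refine integral_congr_ae (ae_of_all _ fun p => ?_)
      by_cases hp : g p.1 + p.2 ∈ t <;>
        simp [Set.indicator_apply, hp]
    have hind1 : ∫ p in (fun p : ℝ × ℝ => g p.1 + p.2) ⁻¹' t,
          g p.1 ∂(μ.prod (gaussianReal 0 ⟨σ ^ 2, sq_nonneg σ⟩))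
        = ∫ p, (fun q : ℝ × ℝ => Set.indicator t (fun _ => (1:ℝ)) q.2 * g q.1)
            (p.1, g p.1 + p.2) ∂(μ.prod (gaussianReal 0 ⟨σ ^ 2, sq_nonneg σ⟩)) := by
      rw [← integral_indicator (hYmeas ht)]
      refine integral_congr_ae (ae_of_all _ fun p => ?_)
      by_cases hp : g p.1 + p.2 ∈ t <;>
        simp [Set.indicator_apply, hp]
    have hindm : Measurable (fun y : ℝ => Set.indicator t (fun _ => (1:ℝ)) y) :=
      measurable_const.indicator ht
    rw [hind2, hind1,
      aux_transfer_eq hσ μ g hg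
        (fun q : ℝ × ℝ => Set.indicator t (fun _ => (1:ℝ)) q.2 * h q.2)
        (by exact (hindm.comp measurable_snd).mul (hmh.comp measurable_snd)),
      aux_transfer_eq hσ μ g hg
        (fun q : ℝ × ℝ => Set.indicator t (fun _ => (1:ℝ)) q.2 * g q.1)
        (by exact (hindm.comp measurable_snd).mul (hg.comp measurable_fst))]
    have hI2 : Integrable (fun q : ℝ × ℝ =>
        Set.indicator t (fun _ => (1:ℝ)) q.2 * h q.2
          * gaussianPDFReal 0 ⟨σ ^ 2, sq_nonneg σ⟩ (q.2 - g q.1)) (μ.prod volume) := by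
      refine hintH.mono (((hindm.comp measurable_snd).mul (hmh.comp measurable_snd)).mul
        ((measurable_gaussianPDFReal _ _).comp
          (measurable_snd.sub (hg.comp measurable_fst)))).aestronglyMeasurable
        (ae_of_all _ fun q => ?_)
      by_cases hq : q.2 ∈ t <;>
        simp [Set.indicator_apply, hq, abs_mul, abs_nonneg, mul_nonneg, norm_mul]
    have hI1 : Integrable (fun q : ℝ × ℝ =>
        Set.indicator t (fun _ => (1:ℝ)) q.2 * g q.1
          * gaussianPDFReal 0 ⟨σ ^ 2, sq_nonneg σ⟩ (q.2 - g q.1)) (μ.prod volume) := by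
      refine hintG.mono (((hindm.comp measurable_snd).mul (hg.comp measurable_fst)).mul
        ((measurable_gaussianPDFReal _ _).comp
          (measurable_snd.sub (hg.comp measurable_fst)))).aestronglyMeasurable
        (ae_of_all _ fun q => ?_)
      by_cases hq : q.2 ∈ t <;>
        simp [Set.indicator_apply, hq, abs_mul, abs_nonneg, mul_nonneg, norm_mul]
    beta_reduce
    have eA : (∫ q : ℝ × ℝ, Set.indicator t (fun _ => (1:ℝ)) q.2 * h q.2
          * gaussianPDFReal 0 ⟨σ ^ 2, sq_nonneg σ⟩ (q.2 - g q.1) ∂(μ.prod volume))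
        = ∫ y, ∫ x, Set.indicator t (fun _ => (1:ℝ)) y * h y
          * gaussianPDFReal 0 ⟨σ ^ 2, sq_nonneg σ⟩ (y - g x) ∂μ ∂volume :=
      (integral_prod_swap _).symm.trans (integral_prod _ (by exact hI2.swap))
    have eB : (∫ q : ℝ × ℝ, Set.indicator t (fun _ => (1:ℝ)) q.2 * g q.1
          * gaussianPDFReal 0 ⟨σ ^ 2, sq_nonneg σ⟩ (q.2 - g q.1) ∂(μ.prod volume))
        = ∫ y, ∫ x, Set.indicator t (fun _ => (1:ℝ)) y * g x
          * gaussianPDFReal 0 ⟨σ ^ 2, sq_nonneg σ⟩ (y - g x) ∂μ ∂volume :=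
      (integral_prod_swap _).symm.trans (integral_prod _ (by exact hI1.swap))
    rw [eA, eB]
    refine integral_congr_ae (ae_of_all _ fun y => ?_)
    by_cases hy : y ∈ t
    · simp only [Set.indicator_of_mem hy, one_mul]
      rw [integral_const_mul]
      exact aux_id hσ μ g hg h hh y
    · simp [Set.indicator_of_notMem hy]
  · refine StronglyMeasurable.aestronglyMeasurable ?_
    exact (hmh.comp (measurable_iff_comap_le.mpr le_rfl)).stronglyMeasurable
end

section
/- Let σ > 0, let μ be a probability measure on ℝ, and let g : ℝ → ℝ be Borel measurable with ∫ g(ξ)² dμ(ξ) < ∞. On the probability space (ℝ², Borel, μ ⊗ N(0, σ²)) define X(x, v) := x, V(x, v) := v and Y := g(X) + V. Suppose γ₂° : ℝ → ℝ is Borel measurable with E[(γ₂°(Y))²] < ∞ and minimizes the second-stage cost for the fixed first-stage strategy g: for every Borel measurable γ₂ : ℝ → ℝ with E[(γ₂(Y))²] < ∞, E[(g(X) − γ₂°(Y))²] ≤ E[(g(X) − γ₂(Y))²]. Then γ₂°(y) = h(y) for P_Y-almost every y, where P_Y is the law of Y and h(y) := [∫ g(ξ)·exp(−(y − g(ξ))²/(2σ²))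 dμ(ξ)] / [∫ exp(−(y − g(ξ))²/(2σ²)) dμ(ξ)]. -/
open MeasureTheory ProbabilityTheory

open ENNReal NNReal

/-- Second integral equation of the Witsenhausen counterexample: if `γ₂°` minimizes the
second-stage cost `E[(g(X) − γ₂(Y))²]` among square-integrable measurable strategies, then
`γ₂°` agrees, for `P_Y`-almost every `y`, with the Bayes ratio
`h(y) = (∫ g(ξ) exp(−(y−g(ξ))²/(2σ²)) dμ(ξ)) / (∫ exp(−(y−g(ξ))²/(2σ²)) dμ(ξ))`. -/
theorem stmt_12 (σ : ℝ) (hσ : 0 < σ) (μ : Measure ℝ) [IsProbabilityMeasure μ]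
    (g : ℝ → ℝ) (hg : Measurable g) (hg2 : Integrable (fun ξ => g ξ ^ 2) μ)
    (P : Measure (ℝ × ℝ)) (hP : P = μ.prod (gaussianReal 0 ⟨σ ^ 2, sq_nonneg σ⟩))
    (X : ℝ × ℝ → ℝ) (hX : ∀ p, X p = p.1)
    (Y : ℝ × ℝ → ℝ) (hY : ∀ p, Y p = g p.1 + p.2)
    (γ₂o : ℝ → ℝ) (hγ₂o_meas : Measurable γ₂o)
    (hγ₂o_sq : Integrable (fun p => γ₂o (Y p) ^ 2) P)
    (hmin : ∀ γ₂ : ℝ → ℝ, Measurable γ₂ → Integrable (fun p => γ₂ (Y p) ^ 2) P →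
      ∫ p, (g (X p) - γ₂o (Y p)) ^ 2 ∂P ≤ ∫ p, (g (X p) - γ₂ (Y p)) ^ 2 ∂P)
    (h : ℝ → ℝ)
    (hh : ∀ y, h y = (∫ ξ, g ξ * Real.exp (-(y - g ξ) ^ 2 / (2 * σ ^ 2)) ∂μ)
        / (∫ ξ, Real.exp (-(y - g ξ) ^ 2 / (2 * σ ^ 2)) ∂μ)) :
    ∀ᵐ y ∂(P.map Y), γ₂o y = h y := by
  classical
  have hP_prob : IsProbabilityMeasure P := by rw [hP]; exact @Measure.prod.instIsProbabilityMeasure _ _ _ _ _ _ _ (instIsProbabilityMeasureGaussianReal 0 _)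
  set σ2 : NNReal := ⟨σ ^ 2, sq_nonneg σ⟩ with hσ2def
  have hσ2 : σ2 ≠ 0 := by
    intro hcon
    have : σ ^ 2 = 0 := congrArg NNReal.toReal hcon
    exact (pow_ne_zero 2 hσ.ne') this
  set k : ℝ → ℝ → ℝ := fun x y => Real.exp (-(y - g x) ^ 2 / (2 * σ ^ 2)) with hkdef
  have hk_pos : ∀ x y, 0 < k x y := fun x y => Real.exp_pos _
  have hk_le : ∀ x y, k x y ≤ 1 := by
    intro x y
    rw [Real.exp_le_one_iff]
    apply div_nonpos_of_nonpos_of_nonneg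
    · simpa using sq_nonneg (y - g x)
    · positivity
  have hk_meas : Measurable (fun q : ℝ × ℝ => k q.1 q.2) := by
    apply Real.measurable_exp.comp
    exact (((measurable_snd.sub (hg.comp measurable_fst)).pow_const 2).neg).div_const _
  set D : ℝ → ℝ := fun y => ∫ x, k x y ∂μ with hDdef
  set N : ℝ → ℝ := fun y => ∫ x, g x * k x y ∂μ with hNdef
  have hgmem : MemLp g 2 μ := by
    rw [memLp_two_iff_integrable_sq hg.aestronglyMeasurable]
    exact hg2
  have hgL1 : Integrable g μ := hgmem.integrable one_le_two
  have hki : ∀ y, Integrable (fun x => k x y) μ := by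
    intro y
    refine (integrable_const (1 : ℝ)).mono' ?_ ?_
    · exact (hk_meas.comp (measurable_id.prodMk measurable_const)).aestronglyMeasurable
    · exact Filter.Eventually.of_forall fun x => by
        rw [Real.norm_eq_abs, abs_of_pos (hk_pos x y)]; exact hk_le x y
  have hgki : ∀ y, Integrable (fun x => g x * k x y) μ := by
    intro y
    refine hgL1.abs.mono' ?_ ?_
    · exact (hg.mul (hk_meas.comp (measurable_id.prodMk measurable_const))).aestronglyMeasurable
    · refine Filter.Eventually.of_forall fun x => ?_
      rw [Real.norm_eq_abs, abs_mul, abs_of_pos (hk_pos x y)]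
      calc |g x| * k x y ≤ |g x| * 1 :=
            mul_le_mul_of_nonneg_left (hk_le x y) (abs_nonneg _)
        _ = |g x| := mul_one _
  have hg2ki : ∀ y, Integrable (fun x => g x ^ 2 * k x y) μ := by
    intro y
    refine hg2.mono' ?_ ?_
    · exact ((hg.pow_const 2).mul
        (hk_meas.comp (measurable_id.prodMk measurable_const))).aestronglyMeasurable
    · refine Filter.Eventually.of_forall fun x => ?_
      rw [Real.norm_eq_abs, abs_mul, abs_of_pos (hk_pos x y)]
      calc |g x ^ 2| * k x y ≤ |g x ^ 2| * 1 :=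
            mul_le_mul_of_nonneg_left (hk_le x y) (abs_nonneg _)
        _ = g x ^ 2 := by rw [mul_one, abs_of_nonneg (sq_nonneg _)]
  have hD_pos : ∀ y, 0 < D y := by
    intro y
    rw [hDdef]
    refine (integral_pos_iff_support_of_nonneg (fun x => (hk_pos x y).le) (hki y)).2 ?_
    have : Function.support (fun x => k x y) = Set.univ := by
      ext x; simp [(hk_pos x y).ne']
    rw [this]
    simp
  have hNh : ∀ y, N y = h y * D y := by
    intro y
    rw [hh y]
    rw [div_mul_cancel₀]
    exact (hD_pos y).ne'
  have horth : ∀ y, ∫ x, (g x - h y) * k x y ∂μ = 0 := by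
    intro y
    have heq : (fun x => (g x - h y) * k x y)
        = fun x => g x * k x y - h y * k x y := by
      funext x; ring
    have i3 : Integrable (fun x => h y * k x y) μ := (hki y).const_mul _
    rw [heq, integral_sub (hgki y) i3, integral_const_mul]
    have := hNh y
    simp only [hNdef, hDdef] at this ⊢
    linarith
  have hvar : ∀ y, h y ^ 2 * D y ≤ ∫ x, g x ^ 2 * k x y ∂μ := by
    intro y
    have h0 : 0 ≤ ∫ x, (g x - h y) ^ 2 * k x y ∂μ :=
      integral_nonneg fun x => mul_nonneg (sq_nonneg _) (hk_pos x y).le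
    have hexp : (fun x => (g x - h y) ^ 2 * k x y)
        = fun x => (g x ^ 2 * k x y - (2 * h y) * (g x * k x y)) + h y ^ 2 * k x y := by
      funext x; ring
    have i2 : Integrable (fun x => 2 * h y * (g x * k x y)) μ := (hgki y).const_mul _
    have i1 : Integrable (fun x => g x ^ 2 * k x y - 2 * h y * (g x * k x y)) μ := by
      exact (hg2ki y).sub i2
    have i3 : Integrable (fun x => h y ^ 2 * k x y) μ := (hki y).const_mul _
    rw [hexp, integral_add i1 i3, integral_sub (hg2ki y) i2, integral_const_mul,
      integral_const_mul] at h0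
    have hn := hNh y
    simp only [hNdef, hDdef] at hn h0 ⊢
    rw [hn] at h0
    nlinarith [h0]
  -- measurability of h
  have hDm : Measurable D := by
    have : StronglyMeasurable (fun y => ∫ x, (fun q : ℝ × ℝ => k q.2 q.1) (y, x) ∂μ) :=
      (hk_meas.comp (measurable_snd.prodMk measurable_fst)).stronglyMeasurable.integral_prod_right'
    exact this.measurable
  have hNm : Measurable N := by
    have : StronglyMeasurable
        (fun y => ∫ x, (fun q : ℝ × ℝ => g q.2 * k q.2 q.1) (y, x) ∂μ) :=
      (((hg.comp measurable_snd).mul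
        (hk_meas.comp (measurable_snd.prodMk measurable_fst)))).stronglyMeasurable.integral_prod_right'
    exact this.measurable
  have hhm : Measurable h := by
    have : h = fun y => N y / D y := funext fun y => hh y
    rw [this]
    exact hNm.div hDm
  -- the pushforward measure identity
  set c : ℝ := Real.sqrt (2 * Real.pi * σ ^ 2) with hcdef
  have hc_pos : 0 < c := Real.sqrt_pos.2 (by positivity)
  have hpdfk : ∀ x y : ℝ, gaussianPDFReal 0 σ2 (y - g x) = c⁻¹ * k x y := by
    intro x y
    simp only [gaussianPDFReal, hσ2def, NNReal.coe_mk, sub_zero, hcdef, hkdef]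
    rfl
  have hYm : Measurable Y := by
    have : Y = fun p => g p.1 + p.2 := funext hY
    rw [this]
    exact (hg.comp measurable_fst).add measurable_snd
  set T : ℝ × ℝ → ℝ × ℝ := fun p => (p.1, Y p) with hTdef
  have hTm : Measurable T := measurable_fst.prodMk hYm
  set w : ℝ × ℝ → NNReal := fun q => Real.toNNReal (gaussianPDFReal 0 σ2 (q.2 - g q.1))
    with hwdef
  have hwm : Measurable w :=
    ((measurable_gaussianPDFReal 0 σ2).comp
      (measurable_snd.sub (hg.comp measurable_fst))).real_toNNReal
  have hwcoe : ∀ q : ℝ × ℝ, ((w q : ℝ≥0∞)) = gaussianPDF 0 σ2 (q.2 - g q.1) := by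
    intro q; rfl
  have hmapT : P.map T = (μ.prod volume).withDensity (fun q => (w q : ℝ≥0∞)) := by
    ext s hs
    rw [Measure.map_apply hTm hs, hP, Measure.prod_apply (hTm hs), withDensity_apply _ hs,
      ← lintegral_indicator hs _,
      MeasureTheory.lintegral_prod _ ((hwm.coe_nnreal_ennreal.indicator hs).aemeasurable)]
    refine lintegral_congr fun x => ?_
    have hsx : MeasurableSet (Prod.mk x ⁻¹' (T ⁻¹' s)) :=
      measurable_prodMk_left (hTm hs)
    rw [gaussianReal_of_var_ne_zero 0 hσ2, withDensity_apply _ hsx, ← lintegral_indicator hsx _]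
    have key : ∀ v : ℝ,
        (Prod.mk x ⁻¹' (T ⁻¹' s)).indicator (gaussianPDF 0 σ2) v
          = (fun y => s.indicator (fun q => (w q : ℝ≥0∞)) (x, y)) (g x + v) := by
      intro v
      show (Prod.mk x ⁻¹' (T ⁻¹' s)).indicator (gaussianPDF 0 σ2) v
          = s.indicator (fun q => (w q : ℝ≥0∞)) (x, g x + v)
      have hm : (v ∈ Prod.mk x ⁻¹' (T ⁻¹' s)) ↔ ((x, g x + v) ∈ s) := by
        simp only [Set.mem_preimage, hTdef, hY]
      by_cases hv : (x, g x + v) ∈ s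
      · rw [Set.indicator_of_mem (hm.2 hv), Set.indicator_of_mem hv, hwcoe]
        congr 1
        ring
      · rw [Set.indicator_of_notMem (fun hc => hv (hm.1 hc)), Set.indicator_of_notMem hv]
    rw [lintegral_congr key, lintegral_add_left_eq_self
      (fun y => s.indicator (fun q => (w q : ℝ≥0∞)) (x, y)) (g x)]
  -- transfer of integrability and integrals through T
  have hwfin : ∀ᵐ q ∂(μ.prod volume), ((w q : ℝ≥0∞)) < ∞ :=
    Filter.Eventually.of_forall fun q => ENNReal.coe_lt_top
  have hwtoReal : ∀ q : ℝ × ℝ, ((w q : ℝ≥0∞)).toReal = c⁻¹ * k q.1 q.2 := by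
    intro q
    rw [ENNReal.coe_toReal, hwdef]
    exact (Real.coe_toNNReal _ (gaussianPDFReal_nonneg _ _ _)).trans (hpdfk q.1 q.2)
  have hint_iff : ∀ f : ℝ × ℝ → ℝ, AEStronglyMeasurable f (P.map T) →
      (Integrable (f ∘ T) P ↔
        Integrable (fun q => f q * (c⁻¹ * k q.1 q.2)) (μ.prod volume)) := by
    intro f hf
    rw [← integrable_map_measure hf hTm.aemeasurable, hmapT,
      integrable_withDensity_iff hwm.coe_nnreal_ennreal hwfin]
    exact integrable_congr (Filter.Eventually.of_forall fun q => by
      simp only []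
      rw [hwtoReal])
  have hint_eq : ∀ f : ℝ × ℝ → ℝ, AEStronglyMeasurable f (P.map T) →
      ∫ p, f (T p) ∂P = ∫ q, (c⁻¹ * k q.1 q.2) * f q ∂(μ.prod volume) := by
    intro f hf
    have e0 : ∫ p, f (T p) ∂P = ∫ q, f q ∂(P.map T) :=
      (integral_map hTm.aemeasurable hf).symm
    rw [e0, hmapT, integral_withDensity_eq_integral_smul hwm f]
    refine integral_congr_ae (Filter.Eventually.of_forall fun q => ?_)
    simp only [NNReal.smul_def, smul_eq_mul]
    congr 1
    have e1 := hwtoReal q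
    rw [ENNReal.coe_toReal] at e1
    exact e1
  -- square integrability of h ∘ Y
  have key2 : ∫⁻ q, ENNReal.ofReal (h q.2 ^ 2 * (c⁻¹ * k q.1 q.2)) ∂(μ.prod volume)
      ≤ ENNReal.ofReal (∫ x, g x ^ 2 ∂μ) := by
    have hmeasF : Measurable fun q : ℝ × ℝ => ENNReal.ofReal (h q.2 ^ 2 * (c⁻¹ * k q.1 q.2)) :=
      (((hhm.comp measurable_snd).pow_const 2).mul (hk_meas.const_mul _)).ennreal_ofReal
    rw [MeasureTheory.lintegral_prod_symm _ hmeasF.aemeasurable]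
    calc ∫⁻ y, ∫⁻ x, ENNReal.ofReal (h y ^ 2 * (c⁻¹ * k x y)) ∂μ ∂volume
        ≤ ∫⁻ y, ENNReal.ofReal c⁻¹ * ∫⁻ x, ENNReal.ofReal (g x ^ 2 * k x y) ∂μ ∂volume := by
          refine lintegral_mono fun y => ?_
          have e1 : ∀ x, ENNReal.ofReal (h y ^ 2 * (c⁻¹ * k x y))
              = ENNReal.ofReal (h y ^ 2 * c⁻¹) * ENNReal.ofReal (k x y) := by
            intro x
            rw [← ENNReal.ofReal_mul (by positivity)]
            ring_nf
          rw [lintegral_congr e1, lintegral_const_mul' _ _ ENNReal.ofReal_ne_top,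
            ← MeasureTheory.ofReal_integral_eq_lintegral_ofReal (hki y)
              (Filter.Eventually.of_forall fun x => (hk_pos x y).le),
            ← ENNReal.ofReal_mul (by positivity),
            ← MeasureTheory.ofReal_integral_eq_lintegral_ofReal (hg2ki y)
              (Filter.Eventually.of_forall fun x => mul_nonneg (sq_nonneg _) (hk_pos x y).le),
            ← ENNReal.ofReal_mul (by positivity)]
          apply ENNReal.ofReal_le_ofReal
          have hv := hvar y
          simp only [hDdef] at hv
          calc h y ^ 2 * c⁻¹ * ∫ x, k x y ∂μ = c⁻¹ * (h y ^ 2 * ∫ x, k x y ∂μ) := by ring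
            _ ≤ c⁻¹ * ∫ x, g x ^ 2 * k x y ∂μ :=
                mul_le_mul_of_nonneg_left hv (by positivity)
      _ = ENNReal.ofReal c⁻¹ * ∫⁻ y, ∫⁻ x, ENNReal.ofReal (g x ^ 2 * k x y) ∂μ ∂volume :=
          lintegral_const_mul' _ _ ENNReal.ofReal_ne_top
      _ = ENNReal.ofReal c⁻¹ * ∫⁻ x, ∫⁻ y, ENNReal.ofReal (g x ^ 2 * k x y) ∂volume ∂μ := by
          congr 1
          exact lintegral_lintegral_swap
            (((((hg.comp measurable_snd).pow_const 2).mul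
              (hk_meas.comp (measurable_snd.prodMk measurable_fst))).ennreal_ofReal).aemeasurable)
      _ = ENNReal.ofReal c⁻¹ * ∫⁻ x, ENNReal.ofReal (g x ^ 2) * ENNReal.ofReal c ∂μ := by
          congr 1
          refine lintegral_congr fun x => ?_
          have e2 : ∀ y : ℝ, ENNReal.ofReal (g x ^ 2 * k x y)
              = ENNReal.ofReal (g x ^ 2) * ENNReal.ofReal (k x y) :=
            fun y => ENNReal.ofReal_mul (sq_nonneg _)
          rw [lintegral_congr e2, lintegral_const_mul' _ _ ENNReal.ofReal_ne_top]
          congr 1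
          have e3 : ∀ y : ℝ, ENNReal.ofReal (k x y)
              = ENNReal.ofReal c * ENNReal.ofReal (gaussianPDFReal (g x) σ2 y) := by
            intro y
            rw [← ENNReal.ofReal_mul hc_pos.le]
            congr 1
            have e4 : gaussianPDFReal 0 σ2 (y - g x) = gaussianPDFReal (0 + g x) σ2 y :=
              gaussianPDFReal_sub y (g x)
            rw [zero_add] at e4
            rw [← e4, hpdfk x y]
            field_simp
          rw [lintegral_congr e3, lintegral_const_mul' _ _ ENNReal.ofReal_ne_top,
            lintegral_gaussianPDFReal_eq_one (g x) hσ2, mul_one]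
      _ = ENNReal.ofReal (∫ x, g x ^ 2 ∂μ) := by
          rw [lintegral_mul_const' _ _ ENNReal.ofReal_ne_top,
            ← MeasureTheory.ofReal_integral_eq_lintegral_ofReal hg2
              (Filter.Eventually.of_forall fun x => sq_nonneg _),
            ← ENNReal.ofReal_mul (by positivity), ← ENNReal.ofReal_mul (by positivity)]
          congr 1
          field_simp
  have hhY2 : Integrable (fun p => h (Y p) ^ 2) P := by
    have hfm : AEStronglyMeasurable (fun q : ℝ × ℝ => h q.2 ^ 2) (P.map T) :=
      ((hhm.comp measurable_snd).pow_const 2).aestronglyMeasurable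
    have hint : Integrable (fun q : ℝ × ℝ => h q.2 ^ 2 * (c⁻¹ * k q.1 q.2)) (μ.prod volume) := by
      constructor
      · exact (((hhm.comp measurable_snd).pow_const 2).mul
          (hk_meas.const_mul _)).aestronglyMeasurable
      · rw [hasFiniteIntegral_iff_ofReal (Filter.Eventually.of_forall fun q =>
          mul_nonneg (sq_nonneg _) (by positivity))]
        exact lt_of_le_of_lt key2 ENNReal.ofReal_lt_top
    exact (hint_iff (fun q => h q.2 ^ 2) hfm).2 hint
  -- MemLp facts
  have hgXm : Measurable fun p : ℝ × ℝ => g p.1 := hg.comp measurable_fst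
  have hgX2 : Integrable (fun p => g p.1 ^ 2) P := by
    have hmapfst : P.map Prod.fst = μ := by
      rw [hP, Measure.map_fst_prod]
      simp
    have hint : Integrable (fun x => g x ^ 2) (P.map Prod.fst) := by rw [hmapfst]; exact hg2
    exact (integrable_map_measure (hg.pow_const 2).aestronglyMeasurable
      measurable_fst.aemeasurable).1 hint
  have memgX : MemLp (fun p : ℝ × ℝ => g p.1) 2 P := by
    rw [memLp_two_iff_integrable_sq hgXm.aestronglyMeasurable]
    exact hgX2
  have memhY : MemLp (fun p => h (Y p)) 2 P := by
    have hm1 : Measurable fun p : ℝ × ℝ => h (Y p) := hhm.comp hYm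
    rw [memLp_two_iff_integrable_sq hm1.aestronglyMeasurable]
    exact hhY2
  have memγY : MemLp (fun p => γ₂o (Y p)) 2 P := by
    have hm1 : Measurable fun p : ℝ × ℝ => γ₂o (Y p) := hγ₂o_meas.comp hYm
    rw [memLp_two_iff_integrable_sq hm1.aestronglyMeasurable]
    exact hγ₂o_sq
  have hpqr : (1 : ℝ≥0∞) / 1 = 1 / 2 + 1 / 2 := by
    rw [ENNReal.div_add_div_same, one_add_one_eq_two, one_div_one]
    exact (ENNReal.div_self two_ne_zero ENNReal.ofNat_ne_top).symm
  have hmul : ∀ u v : (ℝ × ℝ) → ℝ, MemLp u 2 P → MemLp v 2 P →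
      Integrable (fun p => u p * v p) P := by
    intro u v hu hv
    have hsm := MemLp.smul (r := 1) hv hu
    rw [memLp_one_iff_integrable] at hsm
    exact hsm
  -- the cross term vanishes
  set φf : ℝ × ℝ → ℝ := fun q => (g q.1 - h q.2) * (h q.2 - γ₂o q.2) with hφdef
  have hφm : Measurable φf :=
    ((hg.comp measurable_fst).sub (hhm.comp measurable_snd)).mul
      ((hhm.comp measurable_snd).sub (hγ₂o_meas.comp measurable_snd))
  have memsub1 : MemLp (fun p => g p.1 - h (Y p)) 2 P := by exact memgX.sub memhY
  have memsub2 : MemLp (fun p => h (Y p) - γ₂o (Y p)) 2 P := by exact memhY.sub memγY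
  have hφint : Integrable (φf ∘ T) P := by
    have he : (φf ∘ T) = fun p => (g p.1 - h (Y p)) * (h (Y p) - γ₂o (Y p)) := rfl
    rw [he]
    exact hmul _ _ memsub1 memsub2
  have hC : ∫ p, (g p.1 - h (Y p)) * (h (Y p) - γ₂o (Y p)) ∂P = 0 := by
    have hsm : AEStronglyMeasurable φf (P.map T) := hφm.aestronglyMeasurable
    have he2 : ∫ p, (g p.1 - h (Y p)) * (h (Y p) - γ₂o (Y p)) ∂P = ∫ p, φf (T p) ∂P := rfl
    rw [he2, hint_eq φf hsm]
    have hInt2 : Integrable (fun q => (c⁻¹ * k q.1 q.2) * φf q) (μ.prod volume) := by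
      have h1 := (hint_iff φf hsm).1 hφint
      exact h1.congr (Filter.Eventually.of_forall fun q => mul_comm _ _)
    rw [MeasureTheory.integral_prod_symm _ hInt2]
    have inner0 : ∀ y, ∫ x, (c⁻¹ * k x y) * φf (x, y) ∂μ = 0 := by
      intro y
      have e : (fun x => (c⁻¹ * k x y) * φf (x, y))
          = fun x => (c⁻¹ * (h y - γ₂o y)) * ((g x - h y) * k x y) := by
        funext x
        simp only [hφdef]
        ring
      rw [e, integral_const_mul, horth y, mul_zero]
    simp only [inner0, integral_zero]
  -- expansion of the quadratic cost
  have i1 : Integrable (fun p => (g p.1 - h (Y p)) ^ 2) P := memsub1.integrable_sq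
  have i2 : Integrable (fun p => (h (Y p) - γ₂o (Y p)) ^ 2) P := memsub2.integrable_sq
  have iC : Integrable (fun p => (g p.1 - h (Y p)) * (h (Y p) - γ₂o (Y p))) P :=
    hmul _ _ memsub1 memsub2
  have Eexp : ∫ p, (g p.1 - γ₂o (Y p)) ^ 2 ∂P
      = ∫ p, (g p.1 - h (Y p)) ^ 2 ∂P
        + 2 * ∫ p, (g p.1 - h (Y p)) * (h (Y p) - γ₂o (Y p)) ∂P
        + ∫ p, (h (Y p) - γ₂o (Y p)) ^ 2 ∂P := by
    have hexp2 : (fun p : ℝ × ℝ => (g p.1 - γ₂o (Y p)) ^ 2)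
        = fun p => ((g p.1 - h (Y p)) ^ 2
            + 2 * ((g p.1 - h (Y p)) * (h (Y p) - γ₂o (Y p))))
            + (h (Y p) - γ₂o (Y p)) ^ 2 := by
      funext p
      ring
    have ia : Integrable (fun p => (g p.1 - h (Y p)) ^ 2
        + 2 * ((g p.1 - h (Y p)) * (h (Y p) - γ₂o (Y p)))) P := i1.add (iC.const_mul 2)
    rw [hexp2, integral_add ia i2, integral_add i1 (iC.const_mul 2), integral_const_mul]
  have hminh := hmin h hhm hhY2
  simp only [hX] at hminh
  have hsum : 2 * ∫ p, (g p.1 - h (Y p)) * (h (Y p) - γ₂o (Y p)) ∂P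
      + ∫ p, (h (Y p) - γ₂o (Y p)) ^ 2 ∂P ≤ 0 := by linarith
  have hle0 : ∫ p, (h (Y p) - γ₂o (Y p)) ^ 2 ∂P ≤ 0 := by
    rw [hC] at hsum
    linarith
  have hz : ∫ p, (h (Y p) - γ₂o (Y p)) ^ 2 ∂P = 0 :=
    le_antisymm hle0 (integral_nonneg fun p => sq_nonneg _)
  have hae : (fun p => (h (Y p) - γ₂o (Y p)) ^ 2) =ᵐ[P] 0 :=
    (integral_eq_zero_iff_of_nonneg (fun p => sq_nonneg _) i2).1 hz
  have haeP : ∀ᵐ p ∂P, γ₂o (Y p) = h (Y p) := by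
    filter_upwards [hae] with p hp
    have h1 : (h (Y p) - γ₂o (Y p)) ^ 2 = 0 := hp
    have h2 : h (Y p) - γ₂o (Y p) = 0 := by
      exact pow_eq_zero_iff (two_ne_zero) |>.1 h1
    linarith
  rw [ae_map_iff hYm.aemeasurable (measurableSet_eq_fun hγ₂o_meas hhm)]
  exact haeP
end

section
/- Let σ > 0 and k ∈ ℝ, let μ be a probability measure on ℝ with ∫ x² dμ(x) < ∞, let ḡ : ℝ → ℝ be Borel measurable with ∫ ḡ(x)² dμ(x) < ∞, and let γ₂ : ℝ → ℝ and δ : ℝ → ℝ be bounded Borel measurable. Write φ_σ(z) := (1/√(2πσ²)) exp(−z²/(2σ²)) and γ_σ := N(0, σ²). For t ∈ ℝ define J(t) := ∫∫ [k²·(ḡ(x) + t·δ(x) − x)² + (ḡ(x) + t·δ(x) − γ₂(ḡ(x) + t·δ(x) + v))²] dγ_σ(v) dμ(x). Then J is differentiable at t = 0 with J′(0) = ∫ δ(x)·D(x) dμ(x), where D(x) := 2k²·(ḡ(x) − x) + ∫_ℝ [((ζ − ḡ(x))/σ²)·(ḡ(x) − γ₂(ζ))² + 2·(ḡ(x) −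 γ₂(ζ))]·φ_σ(ζ − ḡ(x)) dζ, the inner integral being with respect to Lebesgue measure. -/
open MeasureTheory ProbabilityTheory

namespace Wits13
open Real


noncomputable def P (σ : ℝ) (z : ℝ) : ℝ := gaussianPDFReal 0 ⟨σ ^ 2, sq_nonneg σ⟩ z

lemma P_def (σ z : ℝ) : P σ z = (Real.sqrt (2 * π * σ ^ 2))⁻¹ * rexp (-z ^ 2 / (2 * σ ^ 2)) := by
  simp [P, gaussianPDFReal]
  rfl

lemma P_nonneg (σ z : ℝ) : 0 ≤ P σ z := gaussianPDFReal_nonneg _ _ _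

lemma P_meas (σ : ℝ) : Measurable (P σ) := measurable_gaussianPDFReal _ _

lemma P_sub_eq (σ u : ℝ) : (fun ζ => P σ (ζ - u)) = gaussianPDFReal u ⟨σ ^ 2, sq_nonneg σ⟩ := by
  funext ζ
  rw [P]
  exact (gaussianPDFReal_sub ζ u).trans (by rw [zero_add])

lemma integrable_P_sub (σ u : ℝ) : Integrable (fun ζ => P σ (ζ - u)) := by
  rw [P_sub_eq]; exact integrable_gaussianPDFReal _ _

lemma integral_P_sub (σ : ℝ) (hσ : 0 < σ) (u : ℝ) : ∫ ζ, P σ (ζ - u) = 1 := by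
  rw [P_sub_eq]
  refine integral_gaussianPDFReal_eq_one u ?_
  intro h
  have := congrArg (fun q : NNReal => (q : ℝ)) h
  simp only [NNReal.coe_mk, NNReal.coe_zero] at this
  exact absurd (show σ ^ 2 = 0 from this) (by positivity)


lemma gauss_cov (σ : ℝ) (hσ : 0 < σ) (F : ℝ → ℝ) (hF : Measurable F) :
    ∫ w, F w ∂(gaussianReal 0 ⟨σ ^ 2, sq_nonneg σ⟩)
      = ∫ ζ, F ζ * gaussianPDFReal 0 ⟨σ ^ 2, sq_nonneg σ⟩ ζ := by
  have hv : (⟨σ ^ 2, sq_nonneg σ⟩ : NNReal) ≠ 0 := by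
    intro h
    have := congrArg (fun q : NNReal => (q : ℝ)) h
    exact absurd (show σ ^ 2 = 0 from this) (by positivity)
  rw [gaussianReal_of_var_ne_zero _ hv]
  have : (gaussianPDF 0 ⟨σ ^ 2, sq_nonneg σ⟩)
      = fun x => ((Real.toNNReal (gaussianPDFReal 0 ⟨σ ^ 2, sq_nonneg σ⟩ x) : NNReal) : ENNReal) :=
    rfl
  rw [this]
  refine (integral_withDensity_eq_integral_smul
    (measurable_gaussianPDFReal 0 _).real_toNNReal F).trans ?_
  refine integral_congr_ae (Filter.Eventually.of_forall fun x => ?_)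
  simp only [NNReal.smul_def, smul_eq_mul,
    Real.coe_toNNReal _ (gaussianPDFReal_nonneg _ _ _), mul_comm]
  exact congrArg (F x * ·) (Real.coe_toNNReal _ (gaussianPDFReal_nonneg _ _ _))

lemma gauss_shift (σ : ℝ) (hσ : 0 < σ) (u : ℝ) (F : ℝ → ℝ) (hF : Measurable F) :
    ∫ w, F (u + w) ∂(gaussianReal 0 ⟨σ ^ 2, sq_nonneg σ⟩)
      = ∫ ζ, F ζ * gaussianPDFReal 0 ⟨σ ^ 2, sq_nonneg σ⟩ (ζ - u) := by
  have hm : Measurable fun w => F (u + w) := hF.comp (measurable_const.add measurable_id)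
  rw [gauss_cov σ hσ _ hm]
  rw [← integral_add_right_eq_self
    (fun z => F (u + z) * gaussianPDFReal 0 ⟨σ ^ 2, sq_nonneg σ⟩ z) (-u)]
  refine integral_congr_ae (Filter.Eventually.of_forall fun x => ?_)
  have h1 : u + (x + -u) = x := by ring
  have h2 : x + -u = x - u := by ring
  have h3 : u + (x - u) = x := by ring
  simp only [h1, h2, h3]

lemma P_hasDerivAt (σ : ℝ) (hσ : 0 < σ) (ζ u : ℝ) :
    HasDerivAt (fun u => P σ (ζ - u)) (((ζ - u) / σ ^ 2) * P σ (ζ - u)) u := by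
  have h1 : HasDerivAt (fun u : ℝ => ζ - u) (-1) u := (hasDerivAt_id u).const_sub ζ
  have h2 := h1.fun_pow 2
  have h3 := (h2.neg.div_const (2 * σ ^ 2)).exp
  have h4 := h3.const_mul (Real.sqrt (2 * π * σ ^ 2))⁻¹
  have he : (fun u => P σ (ζ - u))
      = fun u => (Real.sqrt (2 * π * σ ^ 2))⁻¹ * rexp (-(ζ - u) ^ 2 / (2 * σ ^ 2)) := by
    funext u; rw [P_def]
  rw [he]
  refine h4.congr_deriv ?_
  simp only [Pi.neg_apply]
  rw [P_def]
  have hσ2 : σ ^ 2 ≠ 0 := by positivity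
  field_simp
  ring

-- key exponential comparison used for local domination
lemma P_le_shift (σ : ℝ) (hσ : 0 < σ) {u u₀ : ℝ} (hu : |u - u₀| ≤ 1) (ζ : ℝ) :
    P σ (ζ - u) ≤ (Real.sqrt (2 * π * σ ^ 2))⁻¹ * rexp ((2 * σ ^ 2)⁻¹)
      * rexp (-(4 * σ ^ 2)⁻¹ * (ζ - u₀) ^ 2) := by
  rw [P_def]
  have hA : (0:ℝ) ≤ (Real.sqrt (2 * π * σ ^ 2))⁻¹ := by positivity
  have hσ2 : (0:ℝ) < σ ^ 2 := by positivity
  have habs : (u - u₀) ^ 2 ≤ 1 := by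
    rw [← sq_abs]
    nlinarith [abs_nonneg (u - u₀)]
  have hkey : (ζ - u₀) ^ 2 / 2 - 1 ≤ (ζ - u) ^ 2 := by
    nlinarith [habs, sq_nonneg ((ζ - u) - (u - u₀))]
  have hexp : rexp (-(ζ - u) ^ 2 / (2 * σ ^ 2))
      ≤ rexp ((2 * σ ^ 2)⁻¹ + -(4 * σ ^ 2)⁻¹ * (ζ - u₀) ^ 2) := by
    refine Real.exp_le_exp.2 ?_
    have e1 : -(ζ - u) ^ 2 / (2 * σ ^ 2) = -((2 * σ ^ 2)⁻¹) * (ζ - u) ^ 2 := by ring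
    have e2 : (2 * σ ^ 2)⁻¹ = 2 * (4 * σ ^ 2)⁻¹ := by
      field_simp
      ring
    have hc : (0:ℝ) < (4 * σ ^ 2)⁻¹ := by positivity
    rw [e1, e2]
    nlinarith [hkey, hc]
  calc (Real.sqrt (2 * π * σ ^ 2))⁻¹ * rexp (-(ζ - u) ^ 2 / (2 * σ ^ 2))
      ≤ (Real.sqrt (2 * π * σ ^ 2))⁻¹
        * rexp ((2 * σ ^ 2)⁻¹ + -(4 * σ ^ 2)⁻¹ * (ζ - u₀) ^ 2) :=
        mul_le_mul_of_nonneg_left hexp hA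
    _ = (Real.sqrt (2 * π * σ ^ 2))⁻¹ * rexp ((2 * σ ^ 2)⁻¹)
        * rexp (-(4 * σ ^ 2)⁻¹ * (ζ - u₀) ^ 2) := by rw [Real.exp_add]; ring


open Filter

lemma integrable_abs_mul_exp {b : ℝ} (hb : 0 < b) :
    Integrable (fun z : ℝ => |z| * rexp (-b * z ^ 2)) := by
  have h1 : Integrable (fun z : ℝ => z * rexp (-b * z ^ 2)) := by
    have := integrable_rpow_mul_exp_neg_mul_sq hb (s := 1) (by norm_num)
    refine this.congr (Filter.Eventually.of_forall fun z => ?_)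
    simp only [Real.rpow_one]
  refine h1.abs.congr (Filter.Eventually.of_forall fun z => ?_)
  simp only [abs_mul, abs_of_nonneg (Real.exp_pos _).le]

lemma integrable_abs_mul_P (σ : ℝ) (hσ : 0 < σ) : Integrable (fun z => |z| * P σ z) := by
  have hb : (0 : ℝ) < (2 * σ ^ 2)⁻¹ := by positivity
  have h3 := (integrable_abs_mul_exp hb).const_mul (Real.sqrt (2 * π * σ ^ 2))⁻¹
  refine h3.congr (Filter.Eventually.of_forall fun z => ?_)
  have : -z ^ 2 / (2 * σ ^ 2) = -(2 * σ ^ 2)⁻¹ * z ^ 2 := by ring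
  simp only [P_def, this]
  ring

section Main

variable {σ : ℝ} (hσ : 0 < σ) {γ₂ : ℝ → ℝ} (hγ₂ : Measurable γ₂) {C : ℝ}
  (hC : ∀ y, |γ₂ y| ≤ C)

noncomputable def hfun (σ : ℝ) (γ₂ : ℝ → ℝ) (u : ℝ) : ℝ :=
  ∫ ζ, (u - γ₂ ζ) ^ 2 * P σ (ζ - u)

noncomputable def hfun' (σ : ℝ) (γ₂ : ℝ → ℝ) (u : ℝ) : ℝ :=
  ∫ ζ, (((ζ - u) / σ ^ 2) * (u - γ₂ ζ) ^ 2 + 2 * (u - γ₂ ζ)) * P σ (ζ - u)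

include hγ₂ hC

lemma sub_gamma_abs_le (u ζ : ℝ) : |u - γ₂ ζ| ≤ |u| + C :=
  (abs_sub _ _).trans (by have := hC ζ; linarith)

lemma sub_gamma_sq_le (u ζ : ℝ) : (u - γ₂ ζ) ^ 2 ≤ (|u| + C) ^ 2 := by
  rw [← sq_abs]
  have h0 : (0:ℝ) ≤ |u - γ₂ ζ| := abs_nonneg _
  have := sub_gamma_abs_le hγ₂ hC u ζ
  nlinarith

lemma integrable_hfun_integrand (u : ℝ) :
    Integrable (fun ζ => (u - γ₂ ζ) ^ 2 * P σ (ζ - u)) := by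
  refine Integrable.mono' ((integrable_P_sub σ u).const_mul ((|u| + C) ^ 2)) ?_ ?_
  · exact (((measurable_const.sub hγ₂).pow_const 2).mul
      ((P_meas σ).comp (measurable_id.sub_const u))).aestronglyMeasurable
  · refine Filter.Eventually.of_forall fun ζ => ?_
    rw [Real.norm_eq_abs, abs_mul, abs_of_nonneg (P_nonneg σ _), abs_of_nonneg (sq_nonneg _)]
    exact mul_le_mul_of_nonneg_right (sub_gamma_sq_le hγ₂ hC u ζ) (P_nonneg σ _)

lemma hfun_abs_le (hσ : 0 < σ) (u : ℝ) : |hfun σ γ₂ u| ≤ (|u| + C) ^ 2 := by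
  have h : ‖∫ ζ, (u - γ₂ ζ) ^ 2 * P σ (ζ - u)‖
      ≤ ∫ ζ, (|u| + C) ^ 2 * P σ (ζ - u) := by
    refine norm_integral_le_of_norm_le
      ((integrable_P_sub σ u).const_mul ((|u| + C) ^ 2))
      (Filter.Eventually.of_forall (fun ζ => ?_))
    rw [Real.norm_eq_abs, abs_mul, abs_of_nonneg (P_nonneg σ _), abs_of_nonneg (sq_nonneg _)]
    exact mul_le_mul_of_nonneg_right (sub_gamma_sq_le hγ₂ hC u ζ) (P_nonneg σ _)
  rw [MeasureTheory.integral_const_mul, integral_P_sub σ hσ u, mul_one] at h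
  exact h


lemma hfun'_integrand_le (hσ : 0 < σ) {u u₀ : ℝ} (hu : |u - u₀| ≤ 1) (ζ : ℝ) :
    |(((ζ - u) / σ ^ 2) * (u - γ₂ ζ) ^ 2 + 2 * (u - γ₂ ζ)) * P σ (ζ - u)|
      ≤ ((|u₀| + 1 + C) ^ 2 / σ ^ 2) * (|ζ - u₀|
          * ((Real.sqrt (2 * π * σ ^ 2))⁻¹ * rexp ((2 * σ ^ 2)⁻¹)
              * rexp (-(4 * σ ^ 2)⁻¹ * (ζ - u₀) ^ 2)))
        + ((|u₀| + 1 + C) ^ 2 / σ ^ 2 + 2 * (|u₀| + 1 + C))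
          * ((Real.sqrt (2 * π * σ ^ 2))⁻¹ * rexp ((2 * σ ^ 2)⁻¹)
              * rexp (-(4 * σ ^ 2)⁻¹ * (ζ - u₀) ^ 2)) := by
  set M := |u₀| + 1 + C with hM
  set E := (Real.sqrt (2 * π * σ ^ 2))⁻¹ * rexp ((2 * σ ^ 2)⁻¹)
      * rexp (-(4 * σ ^ 2)⁻¹ * (ζ - u₀) ^ 2) with hE
  have hC0 : 0 ≤ C := le_trans (abs_nonneg _) (hC 0)
  have hM0 : 0 ≤ M := by rw [hM]; positivity
  have habs : |u - γ₂ ζ| ≤ M := by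
    have h1 := sub_gamma_abs_le hγ₂ hC u ζ
    have h2 : |u| ≤ |u₀| + 1 := by
      have := abs_sub_abs_le_abs_sub u u₀
      linarith
    rw [hM]; linarith
  have hsq : (u - γ₂ ζ) ^ 2 ≤ M ^ 2 := by
    rw [← sq_abs]
    nlinarith [abs_nonneg (u - γ₂ ζ)]
  have hP0 := P_nonneg σ (ζ - u)
  have hPE : P σ (ζ - u) ≤ E := P_le_shift σ hσ hu ζ
  have hE0 : 0 ≤ E := le_trans hP0 hPE
  have hζ : |ζ - u| ≤ |ζ - u₀| + 1 := by
    have := abs_sub_abs_le_abs_sub (ζ - u) (ζ - u₀)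
    have h1 : |ζ - u - (ζ - u₀)| = |u - u₀| := by
      rw [show ζ - u - (ζ - u₀) = -(u - u₀) by ring, abs_neg]
    rw [h1] at this
    linarith [abs_abs_sub_abs_le_abs_sub (ζ - u) (ζ - u₀)]
  have hσ2 : (0:ℝ) < σ ^ 2 := by positivity
  have step1 : |(((ζ - u) / σ ^ 2) * (u - γ₂ ζ) ^ 2 + 2 * (u - γ₂ ζ)) * P σ (ζ - u)|
      ≤ ((|ζ - u| / σ ^ 2) * M ^ 2 + 2 * M) * P σ (ζ - u) := by
    rw [abs_mul, abs_of_nonneg hP0]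
    refine mul_le_mul_of_nonneg_right ?_ hP0
    refine (abs_add_le _ _).trans ?_
    have e1 : |((ζ - u) / σ ^ 2) * (u - γ₂ ζ) ^ 2| = (|ζ - u| / σ ^ 2) * (u - γ₂ ζ) ^ 2 := by
      rw [abs_mul, abs_div, abs_of_nonneg (sq_nonneg (u - γ₂ ζ)), abs_of_nonneg hσ2.le]
    have e2 : |2 * (u - γ₂ ζ)| = 2 * |u - γ₂ ζ| := by
      rw [abs_mul, abs_of_nonneg (by norm_num : (0:ℝ) ≤ 2)]
    rw [e1, e2]
    have t1 : (|ζ - u| / σ ^ 2) * (u - γ₂ ζ) ^ 2 ≤ (|ζ - u| / σ ^ 2) * M ^ 2 :=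
      mul_le_mul_of_nonneg_left hsq (by positivity)
    linarith
  refine step1.trans ?_
  have step2 : ((|ζ - u| / σ ^ 2) * M ^ 2 + 2 * M) * P σ (ζ - u)
      ≤ (((|ζ - u₀| + 1) / σ ^ 2) * M ^ 2 + 2 * M) * E := by
    refine mul_le_mul ?_ hPE hP0 ?_
    · have hdiv : |ζ - u| / σ ^ 2 ≤ (|ζ - u₀| + 1) / σ ^ 2 := by gcongr
      nlinarith [sq_nonneg M]
    · positivity
  refine step2.trans (le_of_eq ?_)
  ring

lemma bound_integrable (hσ : 0 < σ) (u₀ : ℝ) :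
    Integrable (fun ζ => ((|u₀| + 1 + C) ^ 2 / σ ^ 2) * (|ζ - u₀|
          * ((Real.sqrt (2 * π * σ ^ 2))⁻¹ * rexp ((2 * σ ^ 2)⁻¹)
              * rexp (-(4 * σ ^ 2)⁻¹ * (ζ - u₀) ^ 2)))
        + ((|u₀| + 1 + C) ^ 2 / σ ^ 2 + 2 * (|u₀| + 1 + C))
          * ((Real.sqrt (2 * π * σ ^ 2))⁻¹ * rexp ((2 * σ ^ 2)⁻¹)
              * rexp (-(4 * σ ^ 2)⁻¹ * (ζ - u₀) ^ 2))) := by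
  have hb : (0:ℝ) < (4 * σ ^ 2)⁻¹ := by positivity
  have h1 : Integrable (fun z : ℝ => |z| * rexp (-(4 * σ ^ 2)⁻¹ * z ^ 2)) :=
    integrable_abs_mul_exp hb
  have h2 : Integrable (fun z : ℝ => rexp (-(4 * σ ^ 2)⁻¹ * z ^ 2)) :=
    integrable_exp_neg_mul_sq hb
  have h1' := (h1.comp_sub_right u₀).const_mul
    (((|u₀| + 1 + C) ^ 2 / σ ^ 2) * ((Real.sqrt (2 * π * σ ^ 2))⁻¹ * rexp ((2 * σ ^ 2)⁻¹)))
  have h2' := (h2.comp_sub_right u₀).const_mul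
    (((|u₀| + 1 + C) ^ 2 / σ ^ 2 + 2 * (|u₀| + 1 + C))
      * ((Real.sqrt (2 * π * σ ^ 2))⁻¹ * rexp ((2 * σ ^ 2)⁻¹)))
  refine (h1'.add h2').congr (Filter.Eventually.of_forall fun ζ => ?_)
  simp only [Pi.add_apply, Function.comp]
  ring

lemma hfun'_integrand_meas (hσ : 0 < σ) (u : ℝ) :
    Measurable (fun ζ =>
      (((ζ - u) / σ ^ 2) * (u - γ₂ ζ) ^ 2 + 2 * (u - γ₂ ζ)) * P σ (ζ - u)) := by
  have hm1 : Measurable fun ζ : ℝ => ζ - u := measurable_id.sub_const u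
  exact (((hm1.div_const _).mul ((measurable_const.sub hγ₂).pow_const 2)).add
    ((measurable_const.sub hγ₂).const_mul 2)).mul ((P_meas σ).comp hm1)

lemma hfun_hasDerivAt (hσ : 0 < σ) (u₀ : ℝ) :
    HasDerivAt (hfun σ γ₂) (hfun' σ γ₂ u₀) u₀ := by
  have main := hasDerivAt_integral_of_dominated_loc_of_deriv_le
    (F := fun u ζ => (u - γ₂ ζ) ^ 2 * P σ (ζ - u))
    (F' := fun u ζ =>
      (((ζ - u) / σ ^ 2) * (u - γ₂ ζ) ^ 2 + 2 * (u - γ₂ ζ)) * P σ (ζ - u))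
    (x₀ := u₀)
    (bound := fun ζ => ((|u₀| + 1 + C) ^ 2 / σ ^ 2) * (|ζ - u₀|
          * ((Real.sqrt (2 * π * σ ^ 2))⁻¹ * rexp ((2 * σ ^ 2)⁻¹)
              * rexp (-(4 * σ ^ 2)⁻¹ * (ζ - u₀) ^ 2)))
        + ((|u₀| + 1 + C) ^ 2 / σ ^ 2 + 2 * (|u₀| + 1 + C))
          * ((Real.sqrt (2 * π * σ ^ 2))⁻¹ * rexp ((2 * σ ^ 2)⁻¹)
              * rexp (-(4 * σ ^ 2)⁻¹ * (ζ - u₀) ^ 2)))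
    (Metric.ball_mem_nhds u₀ one_pos)
    (Filter.Eventually.of_forall fun u =>
      ((((measurable_const.sub hγ₂).pow_const 2).mul
        ((P_meas σ).comp (measurable_id.sub_const u))).aestronglyMeasurable))
    (integrable_hfun_integrand hγ₂ hC u₀)
    ((hfun'_integrand_meas hγ₂ hC hσ u₀).aestronglyMeasurable)
    (Filter.Eventually.of_forall fun ζ => fun u hu => by
      have hu1 : |u - u₀| ≤ 1 := by
        rw [Metric.mem_ball, Real.dist_eq] at hu
        exact hu.le
      exact hfun'_integrand_le hγ₂ hC hσ hu1 ζ)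
    (bound_integrable hγ₂ hC hσ u₀)
    (Filter.Eventually.of_forall fun ζ => fun u _ => by
      have h1 : HasDerivAt (fun u : ℝ => (u - γ₂ ζ) ^ 2) (2 * (u - γ₂ ζ)) u := by
        have := ((hasDerivAt_id u).sub_const (γ₂ ζ)).fun_pow 2
        simpa using this
      have h2 := P_hasDerivAt σ hσ ζ u
      have h3 := h1.mul h2
      show HasDerivAt (fun u => (u - γ₂ ζ) ^ 2 * P σ (ζ - u))
        ((((ζ - u) / σ ^ 2) * (u - γ₂ ζ) ^ 2 + 2 * (u - γ₂ ζ)) * P σ (ζ - u)) u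
      refine h3.congr_deriv ?_
      ring)
  exact main.2

lemma hfun'_meas (hσ : 0 < σ) : Measurable (hfun' σ γ₂) := by
  have hjm : StronglyMeasurable (fun p : ℝ × ℝ =>
      (((p.2 - p.1) / σ ^ 2) * (p.1 - γ₂ p.2) ^ 2 + 2 * (p.1 - γ₂ p.2)) * P σ (p.2 - p.1)) := by
    have hm1 : Measurable fun p : ℝ × ℝ => p.2 - p.1 := measurable_snd.sub measurable_fst
    have hm2 : Measurable fun p : ℝ × ℝ => p.1 - γ₂ p.2 :=
      measurable_fst.sub (hγ₂.comp measurable_snd)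
    exact (((hm1.div_const _).mul (hm2.pow_const 2)).add (hm2.const_mul 2)).mul
      ((P_meas σ).comp hm1) |>.stronglyMeasurable
  exact (StronglyMeasurable.integral_prod_right' hjm).measurable

lemma hfun'_abs_le (hσ : 0 < σ) (u : ℝ) :
    |hfun' σ γ₂ u| ≤ ((|u| + C) ^ 2 / σ ^ 2) * (∫ z, |z| * P σ z) + 2 * (|u| + C) := by
  set m := |u| + C with hm
  have hC0 : 0 ≤ C := le_trans (abs_nonneg _) (hC 0)
  have hm0 : 0 ≤ m := by rw [hm]; positivity
  have hmaj : Integrable (fun ζ => (m ^ 2 / σ ^ 2) * (|ζ - u| * P σ (ζ - u))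
      + (2 * m) * P σ (ζ - u)) := by
    have h1 := ((integrable_abs_mul_P σ hσ).comp_sub_right u).const_mul (m ^ 2 / σ ^ 2)
    have h2 := (integrable_P_sub σ u).const_mul (2 * m)
    refine (h1.add h2).congr (Filter.Eventually.of_forall fun ζ => ?_)
    simp only [Pi.add_apply, Function.comp]
  have h : ‖∫ ζ, (((ζ - u) / σ ^ 2) * (u - γ₂ ζ) ^ 2 + 2 * (u - γ₂ ζ)) * P σ (ζ - u)‖
      ≤ ∫ ζ, ((m ^ 2 / σ ^ 2) * (|ζ - u| * P σ (ζ - u)) + (2 * m) * P σ (ζ - u)) := by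
    refine norm_integral_le_of_norm_le hmaj (Filter.Eventually.of_forall fun ζ => ?_)
    rw [Real.norm_eq_abs, abs_mul, abs_of_nonneg (P_nonneg σ _)]
    have hsq := sub_gamma_sq_le hγ₂ hC u ζ
    have habs := sub_gamma_abs_le hγ₂ hC u ζ
    have hP0 := P_nonneg σ (ζ - u)
    have hσ2 : (0:ℝ) < σ ^ 2 := by positivity
    have t0 : |(((ζ - u) / σ ^ 2) * (u - γ₂ ζ) ^ 2 + 2 * (u - γ₂ ζ))|
        ≤ (|ζ - u| / σ ^ 2) * m ^ 2 + 2 * m := by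
      refine (abs_add_le _ _).trans ?_
      have e1 : |((ζ - u) / σ ^ 2) * (u - γ₂ ζ) ^ 2| = (|ζ - u| / σ ^ 2) * (u - γ₂ ζ) ^ 2 := by
        rw [abs_mul, abs_div, abs_of_nonneg (sq_nonneg (u - γ₂ ζ)), abs_of_nonneg hσ2.le]
      have e2 : |2 * (u - γ₂ ζ)| = 2 * |u - γ₂ ζ| := by
        rw [abs_mul, abs_of_nonneg (by norm_num : (0:ℝ) ≤ 2)]
      rw [e1, e2]
      have : (|ζ - u| / σ ^ 2) * (u - γ₂ ζ) ^ 2 ≤ (|ζ - u| / σ ^ 2) * m ^ 2 :=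
        mul_le_mul_of_nonneg_left hsq (by positivity)
      linarith
    calc |(((ζ - u) / σ ^ 2) * (u - γ₂ ζ) ^ 2 + 2 * (u - γ₂ ζ))| * P σ (ζ - u)
        ≤ ((|ζ - u| / σ ^ 2) * m ^ 2 + 2 * m) * P σ (ζ - u) :=
          mul_le_mul_of_nonneg_right t0 hP0
      _ = (m ^ 2 / σ ^ 2) * (|ζ - u| * P σ (ζ - u)) + (2 * m) * P σ (ζ - u) := by ring
  have heval : ∫ ζ, ((m ^ 2 / σ ^ 2) * (|ζ - u| * P σ (ζ - u)) + (2 * m) * P σ (ζ - u))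
      = (m ^ 2 / σ ^ 2) * (∫ z, |z| * P σ z) + 2 * m := by
    have h1 := ((integrable_abs_mul_P σ hσ).comp_sub_right u).const_mul (m ^ 2 / σ ^ 2)
    have h1' : Integrable (fun ζ => (m ^ 2 / σ ^ 2) * (|ζ - u| * P σ (ζ - u))) := by
      refine h1.congr (Filter.Eventually.of_forall fun ζ => ?_)
      simp only [Function.comp]
    have h2 : Integrable (fun ζ => (2 * m) * P σ (ζ - u)) :=
      (integrable_P_sub σ u).const_mul (2 * m)
    rw [integral_add h1' h2, MeasureTheory.integral_const_mul, MeasureTheory.integral_const_mul,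
      integral_P_sub σ hσ u, mul_one]
    congr 1
    congr 1
    have := integral_add_right_eq_self (μ := MeasureTheory.volume) (fun z : ℝ => |z| * P σ z) (-u)
    rw [← this]
    refine integral_congr_ae (Filter.Eventually.of_forall fun z => ?_)
    simp only [← sub_eq_add_neg]
  rw [← heval]
  exact h

end Main



section Outer

variable {σ : ℝ} {γ₂ : ℝ → ℝ} {C : ℝ}

lemma hfun_continuous (hσ : 0 < σ) (hγ₂ : Measurable γ₂) (hC : ∀ y, |γ₂ y| ≤ C) :
    Continuous (hfun σ γ₂) :=
  continuous_iff_continuousAt.2 fun u => (hfun_hasDerivAt hγ₂ hC hσ u).continuousAt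

lemma inner_eq (hσ : 0 < σ) (hγ₂ : Measurable γ₂) (hC : ∀ y, |γ₂ y| ≤ C) (a u : ℝ) :
    ∫ w, (a + (u - γ₂ (u + w)) ^ 2) ∂(gaussianReal 0 ⟨σ ^ 2, sq_nonneg σ⟩)
      = a + hfun σ γ₂ u := by
  haveI := instIsProbabilityMeasureGaussianReal 0 ⟨σ ^ 2, sq_nonneg σ⟩
  have hmeas : Measurable fun w : ℝ => (u - γ₂ (u + w)) ^ 2 :=
    (measurable_const.sub (hγ₂.comp (measurable_const.add measurable_id))).pow_const 2
  have hint2 : Integrable (fun w => (u - γ₂ (u + w)) ^ 2)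
      (gaussianReal 0 ⟨σ ^ 2, sq_nonneg σ⟩) := by
    refine Integrable.mono' (integrable_const ((|u| + C) ^ 2)) hmeas.aestronglyMeasurable ?_
    refine Filter.Eventually.of_forall fun w => ?_
    rw [Real.norm_eq_abs, abs_of_nonneg (sq_nonneg _)]
    exact sub_gamma_sq_le hγ₂ hC u (u + w)
  rw [integral_add (integrable_const a) hint2, integral_const]
  simp only [probReal_univ, one_smul]
  congr 1
  have := gauss_shift σ hσ u (fun w => (u - γ₂ w) ^ 2)
    ((measurable_const.sub hγ₂).pow_const 2)
  rw [this]
  rfl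

end Outer



end Wits13

open Wits13 Real
set_option maxHeartbeats 1600000

/-- Gâteaux derivative of the Witsenhausen payoff in the first-stage strategy:
`J(t)`, the payoff of the perturbed strategy `ḡ + tδ` with `γ₂` fixed, is differentiable
at `t = 0` with derivative `∫ δ(x) D(x) dμ(x)`, where `D` involves an integral against the
Gaussian density `φ_σ(ζ − ḡ(x))` with respect to Lebesgue measure. -/
theorem stmt_13 (σ : ℝ) (hσ : 0 < σ) (k : ℝ) (μ : Measure ℝ) [IsProbabilityMeasure μ]
    (hμ2 : Integrable (fun x => x ^ 2) μ)
    (gb : ℝ → ℝ) (hgb : Measurable gb) (hgb2 : Integrable (fun x => gb x ^ 2) μ)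
    (γ₂ δ : ℝ → ℝ) (hγ₂ : Measurable γ₂) (hγ₂b : ∃ C, ∀ y, |γ₂ y| ≤ C)
    (hδ : Measurable δ) (hδb : ∃ C, ∀ x, |δ x| ≤ C)
    (φ : ℝ → ℝ)
    (hφ : ∀ z, φ z = (1 / Real.sqrt (2 * Real.pi * σ ^ 2)) * Real.exp (-z ^ 2 / (2 * σ ^ 2)))
    (J : ℝ → ℝ)
    (hJ : ∀ t, J t = ∫ x, ∫ v, (k ^ 2 * (gb x + t * δ x - x) ^ 2
        + (gb x + t * δ x - γ₂ (gb x + t * δ x + v)) ^ 2)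
        ∂(gaussianReal 0 ⟨σ ^ 2, sq_nonneg σ⟩) ∂μ)
    (D : ℝ → ℝ)
    (hD : ∀ x, D x = 2 * k ^ 2 * (gb x - x)
        + ∫ ζ, (((ζ - gb x) / σ ^ 2) * (gb x - γ₂ ζ) ^ 2 + 2 * (gb x - γ₂ ζ)) * φ (ζ - gb x)) :
    HasDerivAt J (∫ x, δ x * D x ∂μ) 0 := by
  obtain ⟨C, hC⟩ := hγ₂b
  obtain ⟨Cδ, hCδ⟩ := hδb
  have hC0 : 0 ≤ C := le_trans (abs_nonneg _) (hC 0)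
  have hCδ0 : 0 ≤ Cδ := le_trans (abs_nonneg _) (hCδ 0)
  -- identify φ with P σ
  have hφP : φ = P σ := by
    funext z; rw [hφ, P_def, one_div]
  -- rewrite J
  have hJeq : J = fun t => ∫ x, (k ^ 2 * (gb x + t * δ x - x) ^ 2
      + hfun σ γ₂ (gb x + t * δ x)) ∂μ := by
    funext t
    rw [hJ t]
    refine integral_congr_ae (Filter.Eventually.of_forall fun x => ?_)
    exact inner_eq hσ hγ₂ hC (k ^ 2 * (gb x + t * δ x - x) ^ 2) (gb x + t * δ x)
  -- identify D with the derivative expression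
  have hDeq : ∀ x, D x = 2 * k ^ 2 * (gb x - x) + hfun' σ γ₂ (gb x) := by
    intro x
    rw [hD x, hφP]
    rfl
  set I₁ : ℝ := ∫ z, |z| * P σ z with hI₁
  have hI₁0 : 0 ≤ I₁ := integral_nonneg fun z => mul_nonneg (abs_nonneg _) (P_nonneg σ _)
  set c : ℝ := Cδ + C with hc
  -- integrable building blocks
  have habs_le_sq : ∀ y : ℝ, |y| ≤ 1 + y ^ 2 := by
    intro y
    nlinarith [sq_nonneg (|y| - 1), abs_nonneg y, sq_abs y]
  have hint_gb : Integrable (fun x => |gb x|) μ := by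
    refine Integrable.mono' ((integrable_const (1:ℝ)).add hgb2)
      hgb.abs.aestronglyMeasurable (Filter.Eventually.of_forall fun x => ?_)
    rw [Real.norm_eq_abs, abs_abs]
    exact habs_le_sq (gb x)
  have hint_x : Integrable (fun x : ℝ => |x|) μ := by
    refine Integrable.mono' ((integrable_const (1:ℝ)).add hμ2)
      measurable_abs.aestronglyMeasurable (Filter.Eventually.of_forall fun x => ?_)
    rw [Real.norm_eq_abs, abs_abs]
    exact habs_le_sq x
  -- the family and its derivative
  set F : ℝ → ℝ → ℝ := fun t x => k ^ 2 * (gb x + t * δ x - x) ^ 2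
      + hfun σ γ₂ (gb x + t * δ x) with hF
  set F' : ℝ → ℝ → ℝ := fun t x => δ x * (2 * k ^ 2 * (gb x + t * δ x - x))
      + δ x * hfun' σ γ₂ (gb x + t * δ x) with hF'
  set bound : ℝ → ℝ := fun x => (Cδ * (2 * k ^ 2 + 2)) * |gb x|
      + (Cδ * (2 * k ^ 2)) * |x| + (Cδ * (2 * (I₁ / σ ^ 2))) * gb x ^ 2
      + Cδ * (2 * k ^ 2 * Cδ + 2 * c ^ 2 * (I₁ / σ ^ 2) + 2 * c) with hbound
  have hconth : Continuous (hfun σ γ₂) := hfun_continuous hσ hγ₂ hC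
  have haff_meas : ∀ t : ℝ, Measurable fun x => gb x + t * δ x := fun t =>
    hgb.add (hδ.const_mul t)
  have main := hasDerivAt_integral_of_dominated_loc_of_deriv_le
    (F := F) (F' := F') (x₀ := 0) (bound := bound) (μ := μ) (Metric.ball_mem_nhds 0 one_pos)
    (Filter.Eventually.of_forall fun t =>
      ((((haff_meas t).sub measurable_id).pow_const 2).const_mul (k ^ 2)).add
        (hconth.measurable.comp (haff_meas t)) |>.aestronglyMeasurable)
    (by
      -- integrability of F 0
      refine Integrable.mono'
        (((hgb2.add hμ2).const_mul (2 * k ^ 2)).add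
          ((hgb2.const_mul 2).add (integrable_const (2 * C ^ 2))))
        (((((haff_meas 0).sub measurable_id).pow_const 2).const_mul (k ^ 2)).add
          (hconth.measurable.comp (haff_meas 0))).aestronglyMeasurable
        (Filter.Eventually.of_forall fun x => ?_)
      have h1 : |hfun σ γ₂ (gb x + 0 * δ x)| ≤ (|gb x + 0 * δ x| + C) ^ 2 :=
        hfun_abs_le hγ₂ hC hσ _
      simp only [zero_mul, add_zero] at h1 ⊢
      rw [Real.norm_eq_abs]
      simp only [hF, zero_mul, add_zero]
      have h2 : (|gb x| + C) ^ 2 ≤ 2 * gb x ^ 2 + 2 * C ^ 2 := by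
        nlinarith [sq_abs (gb x), abs_nonneg (gb x), sq_nonneg (|gb x| - C)]
      have h3 : k ^ 2 * (gb x - x) ^ 2 ≤ 2 * k ^ 2 * (gb x ^ 2 + x ^ 2) := by
        nlinarith [sq_nonneg (gb x + x), sq_nonneg k, sq_nonneg (gb x - x)]
      have h4 : 0 ≤ k ^ 2 * (gb x - x) ^ 2 := by positivity
      have := abs_add_le (k ^ 2 * (gb x - x) ^ 2) (hfun σ γ₂ (gb x))
      rw [abs_of_nonneg h4] at this
      calc |k ^ 2 * (gb x - x) ^ 2 + hfun σ γ₂ (gb x)|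
          ≤ k ^ 2 * (gb x - x) ^ 2 + |hfun σ γ₂ (gb x)| := this
        _ ≤ 2 * k ^ 2 * (gb x ^ 2 + x ^ 2) + (2 * gb x ^ 2 + 2 * C ^ 2) := by
            have := h1.trans h2
            linarith
        _ = 2 * k ^ 2 * (gb x ^ 2 + x ^ 2) + (2 * gb x ^ 2 + 2 * C ^ 2) := rfl)
    (by
      -- a.e. strong measurability of F' 0
      have : Measurable fun x => F' 0 x := by
        refine (hδ.mul (((haff_meas 0).sub measurable_id).const_mul (2 * k ^ 2))).add
          (hδ.mul ((hfun'_meas hγ₂ hC hσ).comp (haff_meas 0)))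
      exact this.aestronglyMeasurable)
    (by
      -- bound
      refine Filter.Eventually.of_forall fun x => fun t ht => ?_
      have htle : |t| ≤ 1 := by
        rw [Metric.mem_ball, Real.dist_eq, sub_zero] at ht
        exact ht.le
      have hu_le : |gb x + t * δ x| ≤ |gb x| + Cδ := by
        refine (abs_add_le _ _).trans ?_
        have : |t * δ x| ≤ Cδ := by
          rw [abs_mul]
          calc |t| * |δ x| ≤ 1 * Cδ :=
            mul_le_mul htle (hCδ x) (abs_nonneg _) zero_le_one
          _ = Cδ := one_mul _
        linarith
      have hδx := hCδ x
      have hδ0 : (0:ℝ) ≤ |δ x| := abs_nonneg _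
      have hh' : |hfun' σ γ₂ (gb x + t * δ x)|
          ≤ ((|gb x + t * δ x| + C) ^ 2 / σ ^ 2) * I₁ + 2 * (|gb x + t * δ x| + C) :=
        hfun'_abs_le hγ₂ hC hσ (gb x + t * δ x)
      have huC : |gb x + t * δ x| + C ≤ |gb x| + c := by rw [hc]; linarith
      have huC0 : 0 ≤ |gb x + t * δ x| + C := by positivity
      have hσ2 : (0:ℝ) < σ ^ 2 := by positivity
      have hsq2 : (|gb x + t * δ x| + C) ^ 2 ≤ (|gb x| + c) ^ 2 := by nlinarith
      have hsq3 : (|gb x| + c) ^ 2 ≤ 2 * gb x ^ 2 + 2 * c ^ 2 := by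
        nlinarith [sq_abs (gb x), sq_nonneg (|gb x| - c)]
      have hh'2 : |hfun' σ γ₂ (gb x + t * δ x)| ≤ ((2 * gb x ^ 2 + 2 * c ^ 2) / σ ^ 2) * I₁
          + 2 * (|gb x| + c) := by
        refine hh'.trans ?_
        have d1 : (|gb x + t * δ x| + C) ^ 2 / σ ^ 2 * I₁
            ≤ (2 * gb x ^ 2 + 2 * c ^ 2) / σ ^ 2 * I₁ := by
          refine mul_le_mul_of_nonneg_right ?_ hI₁0
          gcongr
          exact hsq2.trans hsq3
        linarith
      have hlin : |2 * k ^ 2 * (gb x + t * δ x - x)| ≤ 2 * k ^ 2 * (|gb x| + Cδ + |x|) := by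
        rw [abs_mul]
        have h2k : |2 * k ^ 2| = 2 * k ^ 2 := abs_of_nonneg (by positivity)
        rw [h2k]
        refine mul_le_mul_of_nonneg_left ?_ (by positivity)
        refine (abs_sub _ _).trans ?_
        linarith [hu_le]
      rw [Real.norm_eq_abs]
      simp only [hF']
      have htot : |δ x * (2 * k ^ 2 * (gb x + t * δ x - x))
            + δ x * hfun' σ γ₂ (gb x + t * δ x)|
          ≤ |δ x| * (2 * k ^ 2 * (|gb x| + Cδ + |x|))
          + |δ x| * (((2 * gb x ^ 2 + 2 * c ^ 2) / σ ^ 2) * I₁ + 2 * (|gb x| + c)) := by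
        refine (abs_add_le _ _).trans ?_
        have t1 : |δ x * (2 * k ^ 2 * (gb x + t * δ x - x))|
            ≤ |δ x| * (2 * k ^ 2 * (|gb x| + Cδ + |x|)) := by
          rw [abs_mul]
          exact mul_le_mul_of_nonneg_left hlin hδ0
        have t2 : |δ x * hfun' σ γ₂ (gb x + t * δ x)|
            ≤ |δ x| * (((2 * gb x ^ 2 + 2 * c ^ 2) / σ ^ 2) * I₁ + 2 * (|gb x| + c)) := by
          rw [abs_mul]
          exact mul_le_mul_of_nonneg_left hh'2 hδ0
        linarith
      refine htot.trans ?_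
      rw [hbound]
      have hδC : |δ x| ≤ Cδ := hCδ x
      have hterm0 : 0 ≤ 2 * k ^ 2 * (|gb x| + Cδ + |x|) := by positivity
      have hterm1 : 0 ≤ ((2 * gb x ^ 2 + 2 * c ^ 2) / σ ^ 2) * I₁ + 2 * (|gb x| + c) := by
        have : (0:ℝ) ≤ (2 * gb x ^ 2 + 2 * c ^ 2) / σ ^ 2 := by positivity
        have hc0 : (0:ℝ) ≤ c := by rw [hc]; positivity
        nlinarith [abs_nonneg (gb x), mul_nonneg this hI₁0]
      have m1 : |δ x| * (2 * k ^ 2 * (|gb x| + Cδ + |x|))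
          ≤ Cδ * (2 * k ^ 2 * (|gb x| + Cδ + |x|)) :=
        mul_le_mul_of_nonneg_right hδC hterm0
      have m2 : |δ x| * (((2 * gb x ^ 2 + 2 * c ^ 2) / σ ^ 2) * I₁ + 2 * (|gb x| + c))
          ≤ Cδ * (((2 * gb x ^ 2 + 2 * c ^ 2) / σ ^ 2) * I₁ + 2 * (|gb x| + c)) :=
        mul_le_mul_of_nonneg_right hδC hterm1
      have expand : Cδ * (2 * k ^ 2 * (|gb x| + Cδ + |x|))
          + Cδ * (((2 * gb x ^ 2 + 2 * c ^ 2) / σ ^ 2) * I₁ + 2 * (|gb x| + c))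
          = (Cδ * (2 * k ^ 2 + 2)) * |gb x| + (Cδ * (2 * k ^ 2)) * |x|
            + (Cδ * (2 * (I₁ / σ ^ 2))) * gb x ^ 2
            + Cδ * (2 * k ^ 2 * Cδ + 2 * c ^ 2 * (I₁ / σ ^ 2) + 2 * c) := by
        field_simp
        ring
      linarith [m1, m2, le_of_eq expand])
    (by
      -- integrability of bound
      refine ((((hint_gb.const_mul (Cδ * (2 * k ^ 2 + 2))).add
        (hint_x.const_mul (Cδ * (2 * k ^ 2)))).add
        (hgb2.const_mul (Cδ * (2 * (I₁ / σ ^ 2))))).add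
        (integrable_const (Cδ * (2 * k ^ 2 * Cδ + 2 * c ^ 2 * (I₁ / σ ^ 2) + 2 * c)))).congr
        (Filter.Eventually.of_forall fun x => ?_)
      simp only [hbound, Pi.add_apply])
    (by
      -- differentiability
      refine Filter.Eventually.of_forall fun x => fun t _ => ?_
      have h1 : HasDerivAt (fun t : ℝ => gb x + t * δ x - x) (δ x) t := by
        have := (((hasDerivAt_id t).mul_const (δ x)).const_add (gb x)).sub_const x
        simpa using this
      have h2 : HasDerivAt (fun t : ℝ => k ^ 2 * (gb x + t * δ x - x) ^ 2)
          (k ^ 2 * (2 * (gb x + t * δ x - x) * δ x)) t := by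
        have := (h1.fun_pow 2).const_mul (k ^ 2)
        simpa using this
      have h3 : HasDerivAt (fun t : ℝ => hfun σ γ₂ (gb x + t * δ x))
          (hfun' σ γ₂ (gb x + t * δ x) * δ x) t := by
        have hin : HasDerivAt (fun t : ℝ => gb x + t * δ x) (δ x) t := by
          have := ((hasDerivAt_id t).mul_const (δ x)).const_add (gb x)
          simpa using this
        exact (hfun_hasDerivAt hγ₂ hC hσ (gb x + t * δ x)).comp t hin
      have h4 := h2.add h3
      have h5 : HasDerivAt (fun t => F t x) (k ^ 2 * (2 * (gb x + t * δ x - x) * δ x)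
          + hfun' σ γ₂ (gb x + t * δ x) * δ x) t := h4
      refine h5.congr_deriv ?_
      simp only [hF']
      ring)
  rw [hJeq]
  have hder := main.2
  have hval : ∫ x, F' 0 x ∂μ = ∫ x, δ x * D x ∂μ := by
    refine integral_congr_ae (Filter.Eventually.of_forall fun x => ?_)
    simp only [hF', hDeq x, zero_mul, add_zero]
    ring
  rw [← hval]
  exact hder
end

section
/- Let σ > 0 and k ≠ 0, let μ be a probability measure on ℝ with ∫ x² dμ(x) < ∞, let ḡ : ℝ → ℝ be Borel measurable with ∫ ḡ(x)² dμ(x) < ∞, and let γ₂ : ℝ → ℝ be bounded Borel measurable. Write φ_σ(z) := (1/√(2πσ²)) exp(−z²/(2σ²)) and γ_σ := N(0, σ²). Suppose ḡ minimizes the payoff among bounded perturbations with γ₂ fixed: for every bounded Borel measurable δ : ℝ → ℝ and every t ∈ ℝ, ∫∫ [k²·(ḡ(x) + t·δ(x) − x)² + (ḡ(x) + t·δ(x) − γ₂(ḡ(x) + t·δ(x) + v))²] dγ_σ(v) dμ(x) ≥ ∫∫ [k²·(ḡ(x) − x)² + (ḡ(x) − γ₂(ḡ(x) + v))²] dγ_σ(v)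 dμ(x). Then for μ-almost every x, ḡ(x) = x − (1/k²) ∫_ℝ [((ζ − ḡ(x))/(2σ²))·(ḡ(x) − γ₂(ζ))² + (ḡ(x) − γ₂(ζ))]·φ_σ(ζ − ḡ(x)) dζ, the integral being with respect to Lebesgue measure. -/
open MeasureTheory ProbabilityTheory Real
open scoped ENNReal NNReal

noncomputable def wphi (σ : ℝ) (z : ℝ) : ℝ := gaussianPDFReal 0 ⟨σ^2, sq_nonneg σ⟩ z

lemma wphi_eq (σ z : ℝ) :
    wphi σ z = (1 / Real.sqrt (2 * Real.pi * σ ^ 2)) * Real.exp (-z ^ 2 / (2 * σ ^ 2)) := by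
  simp [wphi, gaussianPDFReal, one_div]; rfl

lemma wphi_nonneg (σ z : ℝ) : 0 ≤ wphi σ z := gaussianPDFReal_nonneg _ _ _

lemma measurable_wphi (σ : ℝ) : Measurable (wphi σ) := measurable_gaussianPDFReal _ _

lemma integrable_wphi (σ : ℝ) : Integrable (wphi σ) := integrable_gaussianPDFReal _ _

lemma nnvar_ne_zero {σ : ℝ} (hσ : 0 < σ) : (⟨σ^2, sq_nonneg σ⟩ : ℝ≥0) ≠ 0 := by
  intro h
  have : σ ^ 2 = 0 := congrArg NNReal.toReal h
  nlinarith

lemma integral_wphi {σ : ℝ} (hσ : 0 < σ) : ∫ z, wphi σ z = 1 :=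
  integral_gaussianPDFReal_eq_one 0 (nnvar_ne_zero hσ)

lemma hasDerivAt_wphi {σ : ℝ} (hσ : 0 < σ) (z : ℝ) :
    HasDerivAt (wphi σ) (-(z / σ ^ 2) * wphi σ z) z := by
  have h2 : (2 * σ ^ 2) ≠ 0 := by positivity
  have h : HasDerivAt (fun z : ℝ => (1 / Real.sqrt (2 * Real.pi * σ ^ 2)) * Real.exp (-z ^ 2 / (2 * σ ^ 2)))
      ((1 / Real.sqrt (2 * Real.pi * σ ^ 2)) * (Real.exp (-z ^ 2 / (2 * σ ^ 2)) * (-(2*z) / (2 * σ ^ 2)))) z := by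
    have hz : HasDerivAt (fun z : ℝ => -z ^ 2 / (2 * σ ^ 2)) (-(2*z) / (2 * σ ^ 2)) z := by
      have := ((hasDerivAt_pow 2 z).neg).div_const (2 * σ ^ 2)
      simpa using this
    exact (hz.exp).const_mul _
  have h' : HasDerivAt (wphi σ)
      ((1 / Real.sqrt (2 * Real.pi * σ ^ 2)) * (Real.exp (-z ^ 2 / (2 * σ ^ 2)) * (-(2*z) / (2 * σ ^ 2)))) z := by
    refine h.congr_of_eventuallyEq ?_
    filter_upwards with y; rw [wphi_eq]
  convert h' using 1
  rw [wphi_eq]; field_simp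

lemma wphi_shift_le {σ : ℝ} (hσ : 0 < σ) {u u₀ : ℝ} (hu : |u - u₀| ≤ 1) (ζ : ℝ) :
    wphi σ (ζ - u) ≤ Real.exp (1/(2*σ^2)) * (1 / Real.sqrt (2 * Real.pi * σ ^ 2))
      * Real.exp (-(ζ - u₀) ^ 2 / (4 * σ ^ 2)) := by
  rw [wphi_eq]
  have hc : (0:ℝ) ≤ 1 / Real.sqrt (2 * Real.pi * σ ^ 2) := by positivity
  have key : -(ζ - u) ^ 2 / (2 * σ ^ 2) ≤ 1/(2*σ^2) + (-(ζ - u₀) ^ 2 / (4 * σ ^ 2)) := by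
    have h1 : (ζ - u₀)^2 ≤ 2*(ζ - u)^2 + 2*(u - u₀)^2 := by nlinarith [sq_nonneg (ζ - u - (u - u₀)), sq_nonneg (ζ-u+(u-u₀))]
    have h2 : (u - u₀)^2 ≤ 1 := by
      have := abs_nonneg (u - u₀); nlinarith [sq_abs (u - u₀)]
    have hs : (0:ℝ) < σ^2 := by positivity
    rw [div_add_div _ _ (by positivity : (2*σ^2:ℝ) ≠ 0) (by positivity : (4*σ^2:ℝ) ≠ 0), div_le_div_iff₀ (by positivity) (by positivity)]
    nlinarith [mul_le_mul_of_nonneg_left h1 (by positivity : (0:ℝ) ≤ σ^2*σ^2), mul_le_mul_of_nonneg_left h2 (by positivity : (0:ℝ) ≤ σ^2*σ^2)]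
  calc 1 / Real.sqrt (2 * Real.pi * σ ^ 2) * Real.exp (-(ζ - u) ^ 2 / (2 * σ ^ 2))
      ≤ 1 / Real.sqrt (2 * Real.pi * σ ^ 2) * Real.exp (1/(2*σ^2) + (-(ζ - u₀) ^ 2 / (4 * σ ^ 2))) := by
        exact mul_le_mul_of_nonneg_left (Real.exp_le_exp.mpr key) hc
    _ = _ := by rw [Real.exp_add]; ring

lemma integrable_poly_gauss {σ : ℝ} (hσ : 0 < σ) (a b u₀ : ℝ) :
    Integrable (fun ζ : ℝ => (a + b * |ζ - u₀|) * Real.exp (-(ζ - u₀) ^ 2 / (4 * σ ^ 2))) := by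
  have hb : (0:ℝ) < 1/(4*σ^2) := by positivity
  have h1 : Integrable (fun z : ℝ => (a + b * |z|) * Real.exp (-(1/(4*σ^2)) * z ^ 2)) := by
    have i1 := (integrable_exp_neg_mul_sq hb).const_mul a
    have i2 := ((integrable_mul_exp_neg_mul_sq hb).abs).const_mul b
    have : Integrable (fun z : ℝ => a * Real.exp (-(1/(4*σ^2)) * z ^ 2)
        + b * |z * Real.exp (-(1/(4*σ^2)) * z ^ 2)|) := i1.add i2
    refine this.congr (by filter_upwards with z; rw [abs_mul, abs_of_nonneg (Real.exp_nonneg _)]; ring)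
  have := h1.comp_sub_right u₀
  refine this.congr (by filter_upwards with ζ; congr 1; ring_nf)

lemma integral_gaussdens {σ : ℝ} (hσ : 0 < σ) (f : ℝ → ℝ) :
    ∫ z, f z ∂(gaussianReal 0 ⟨σ ^ 2, sq_nonneg σ⟩) = ∫ z, wphi σ z * f z := by
  rw [gaussianReal_of_var_ne_zero 0 (nnvar_ne_zero hσ)]
  change ∫ z, f z ∂(volume.withDensity (fun x => ENNReal.ofReal (gaussianPDFReal 0 ⟨σ ^ 2, sq_nonneg σ⟩ x))) = _
  have h : ∀ z : ℝ, ENNReal.ofReal (gaussianPDFReal 0 ⟨σ ^ 2, sq_nonneg σ⟩ z)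
      = (((gaussianPDFReal 0 ⟨σ ^ 2, sq_nonneg σ⟩ z).toNNReal : ℝ≥0) : ℝ≥0∞) := fun z => rfl
  simp_rw [h]
  refine (integral_withDensity_eq_integral_smul ((measurable_gaussianPDFReal 0 _).real_toNNReal) _).trans ?_
  congr 1; ext z
  simp [NNReal.smul_def, Real.coe_toNNReal _ (gaussianPDFReal_nonneg 0 _ z), smul_eq_mul, wphi]
  exact Or.inl (gaussianPDFReal_nonneg _ _ _)

noncomputable def wPhi (σ : ℝ) (γ₂ : ℝ → ℝ) (u : ℝ) : ℝ := ∫ ζ, (u - γ₂ ζ)^2 * wphi σ (ζ - u)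

noncomputable def wPsi (σ : ℝ) (γ₂ : ℝ → ℝ) (u : ℝ) : ℝ :=
  ∫ ζ, (2*(u - γ₂ ζ) + (u - γ₂ ζ)^2 * ((ζ - u)/σ^2)) * wphi σ (ζ - u)

noncomputable def wM (σ : ℝ) : ℝ := ∫ z, |z| * wphi σ z

lemma integrable_abs_wphi {σ : ℝ} (hσ : 0 < σ) : Integrable (fun z : ℝ => |z| * wphi σ z) := by
  have h : Integrable (fun z : ℝ => (0 + 1 * |z - 0|) * Real.exp (-(z - 0) ^ 2 / (4 * σ ^ 2))) :=
    integrable_poly_gauss hσ 0 1 0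
  refine (h.const_mul (Real.exp (1/(2*σ^2)) * (1 / Real.sqrt (2 * Real.pi * σ ^ 2)))).mono'
    ((measurable_abs.mul (measurable_wphi σ)).aestronglyMeasurable) ?_
  filter_upwards with z
  rw [Real.norm_eq_abs, abs_mul, abs_abs, abs_of_nonneg (wphi_nonneg σ z)]
  have := wphi_shift_le hσ (u := 0) (u₀ := 0) (by simp) z
  simp only [sub_zero] at this ⊢
  calc |z| * wphi σ z ≤ |z| * (Real.exp (1/(2*σ^2)) * (1 / Real.sqrt (2 * Real.pi * σ ^ 2))
        * Real.exp (-z ^ 2 / (4 * σ ^ 2))) := mul_le_mul_of_nonneg_left this (abs_nonneg z)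
    _ = _ := by ring

lemma wM_nonneg {σ : ℝ} (hσ : 0 < σ) : 0 ≤ wM σ :=
  integral_nonneg fun z => mul_nonneg (abs_nonneg z) (wphi_nonneg σ z)

section gamma
variable {σ : ℝ} (hσ : 0 < σ) {γ₂ : ℝ → ℝ} (hγ₂ : Measurable γ₂) {C : ℝ} (hC : ∀ y, |γ₂ y| ≤ C)

include hσ hγ₂ hC

lemma integrable_Phi_integrand (u : ℝ) :
    Integrable (fun ζ => (u - γ₂ ζ)^2 * wphi σ (ζ - u)) := by
  have h : Integrable (fun ζ : ℝ => ((|u|+C)^2 + 0 * |ζ - u|) * Real.exp (-(ζ - u) ^ 2 / (4 * σ ^ 2))) :=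
    integrable_poly_gauss hσ _ 0 u
  refine (h.const_mul (Real.exp (1/(2*σ^2)) * (1 / Real.sqrt (2 * Real.pi * σ ^ 2)))).mono'
    ((((measurable_const.sub hγ₂).pow_const 2).mul ((measurable_wphi σ).comp (measurable_id.sub_const u))).aestronglyMeasurable) ?_
  filter_upwards with ζ
  rw [Real.norm_eq_abs, abs_mul, abs_of_nonneg (wphi_nonneg _ _)]
  have h1 : |(u - γ₂ ζ)^2| ≤ (|u|+C)^2 := by
    rw [abs_of_nonneg (sq_nonneg _)]
    have : |u - γ₂ ζ| ≤ |u| + C := (abs_sub _ _).trans (by linarith [hC ζ])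
    calc (u - γ₂ ζ)^2 = |u - γ₂ ζ|^2 := (sq_abs _).symm
      _ ≤ (|u|+C)^2 := pow_le_pow_left₀ (abs_nonneg _) this 2
  have h2 := wphi_shift_le hσ (u := u) (u₀ := u) (by simp) ζ
  have hCnn : (0:ℝ) ≤ (|u|+C)^2 := sq_nonneg _
  calc |(u - γ₂ ζ)^2| * wphi σ (ζ - u) ≤ (|u|+C)^2 * (Real.exp (1/(2*σ^2)) * (1 / Real.sqrt (2 * Real.pi * σ ^ 2)) * Real.exp (-(ζ - u) ^ 2 / (4 * σ ^ 2))) := by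
        exact mul_le_mul h1 h2 (wphi_nonneg _ _) hCnn
    _ = _ := by ring
end gamma

lemma hC0 {γ₂ : ℝ → ℝ} {C : ℝ} (hC : ∀ y, |γ₂ y| ≤ C) : 0 ≤ C :=
  le_trans (abs_nonneg _) (hC 0)

noncomputable def psiBound (σ C u₀ : ℝ) (ζ : ℝ) : ℝ :=
  (Real.exp (1/(2*σ^2)) * (1 / Real.sqrt (2*Real.pi*σ^2))) *
    ((2*(|u₀|+1+C) + (|u₀|+1+C)^2/σ^2) + ((|u₀|+1+C)^2/σ^2) * |ζ - u₀|) *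
    Real.exp (-(ζ-u₀)^2/(4*σ^2))

lemma integrable_psiBound {σ : ℝ} (hσ : 0 < σ) (C u₀ : ℝ) : Integrable (psiBound σ C u₀) := by
  have := (integrable_poly_gauss hσ (2*(|u₀|+1+C) + (|u₀|+1+C)^2/σ^2) ((|u₀|+1+C)^2/σ^2) u₀).const_mul
    (Real.exp (1/(2*σ^2)) * (1 / Real.sqrt (2*Real.pi*σ^2)))
  refine this.congr (by filter_upwards with ζ; unfold psiBound; ring)

section gamma2
variable {σ : ℝ} (hσ : 0 < σ) {γ₂ : ℝ → ℝ} (hγ₂ : Measurable γ₂) {C : ℝ} (hC : ∀ y, |γ₂ y| ≤ C)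

include hσ hC

lemma psi_integrand_le {u₀ u : ℝ} (hu : |u - u₀| ≤ 1) (ζ : ℝ) :
    ‖(2*(u - γ₂ ζ) + (u - γ₂ ζ)^2 * ((ζ - u)/σ^2)) * wphi σ (ζ - u)‖ ≤ psiBound σ C u₀ ζ := by
  set A := |u₀| + 1 + C with hA
  have hA0 : 0 ≤ A := by have := hC0 hC; have := abs_nonneg u₀; linarith
  have h1 : |u - γ₂ ζ| ≤ A := by
    have h := abs_sub (u) (γ₂ ζ)
    have hu' : |u| ≤ |u₀| + 1 := by
      have := abs_sub_abs_le_abs_sub u u₀; linarith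
    have := hC ζ; rw [hA]; linarith [abs_sub u (γ₂ ζ)]
  have h2 : |ζ - u| ≤ |ζ - u₀| + 1 := by
    have : ζ - u = (ζ - u₀) + (u₀ - u) := by ring
    rw [this]
    refine (abs_add_le _ _).trans ?_
    rw [abs_sub_comm u₀ u]; linarith
  have hσ2 : (0:ℝ) < σ^2 := by positivity
  have hmain : |2*(u - γ₂ ζ) + (u - γ₂ ζ)^2 * ((ζ - u)/σ^2)|
      ≤ 2*A + A^2 * ((|ζ - u₀|+1)/σ^2) := by
    refine (abs_add_le _ _).trans ?_
    have e1 : |2*(u - γ₂ ζ)| ≤ 2*A := by rw [abs_mul]; simp; linarith [h1]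
    have e2 : |(u - γ₂ ζ)^2 * ((ζ - u)/σ^2)| ≤ A^2 * ((|ζ - u₀|+1)/σ^2) := by
      rw [abs_mul, abs_div, abs_of_nonneg (le_of_lt hσ2), abs_of_nonneg (sq_nonneg _), ← sq_abs]
      refine mul_le_mul (pow_le_pow_left₀ (abs_nonneg _) h1 2) (by gcongr) (by positivity) (by positivity)
    linarith
  rw [Real.norm_eq_abs, abs_mul, abs_of_nonneg (wphi_nonneg _ _)]
  have hw := wphi_shift_le hσ hu ζ
  calc |2*(u - γ₂ ζ) + (u - γ₂ ζ)^2 * ((ζ - u)/σ^2)| * wphi σ (ζ - u)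
      ≤ (2*A + A^2 * ((|ζ - u₀|+1)/σ^2)) *
        (Real.exp (1/(2*σ^2)) * (1 / Real.sqrt (2*Real.pi*σ^2)) * Real.exp (-(ζ-u₀)^2/(4*σ^2))) := by
        refine mul_le_mul hmain hw (wphi_nonneg _ _) (by positivity)
    _ = psiBound σ C u₀ ζ := by unfold psiBound; rw [hA]; field_simp; ring
end gamma2

section gamma3
variable {σ : ℝ} (hσ : 0 < σ) {γ₂ : ℝ → ℝ} (hγ₂ : Measurable γ₂) {C : ℝ} (hC : ∀ y, |γ₂ y| ≤ C)

lemma meas_psi_integrand (u : ℝ) (hγ₂' : Measurable γ₂) :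
    AEStronglyMeasurable (fun ζ => (2*(u - γ₂ ζ) + (u - γ₂ ζ)^2 * ((ζ - u)/σ^2)) * wphi σ (ζ - u)) volume := by
  refine Measurable.aestronglyMeasurable ?_
  exact (((measurable_const.sub hγ₂').const_mul 2).add
    (((measurable_const.sub hγ₂').pow_const 2).mul ((measurable_id.sub_const u).div_const _))).mul
    ((measurable_wphi σ).comp (measurable_id.sub_const u))

include hσ hγ₂ hC

lemma hasDerivAt_wPhi (u₀ : ℝ) : HasDerivAt (wPhi σ γ₂) (wPsi σ γ₂ u₀) u₀ := by
  have main := hasDerivAt_integral_of_dominated_loc_of_deriv_le (μ := volume)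
    (F := fun u ζ => (u - γ₂ ζ)^2 * wphi σ (ζ - u))
    (F' := fun u ζ => (2*(u - γ₂ ζ) + (u - γ₂ ζ)^2 * ((ζ - u)/σ^2)) * wphi σ (ζ - u))
    (x₀ := u₀) (bound := psiBound σ C u₀) (s := Metric.ball u₀ 1)
    (Metric.ball_mem_nhds u₀ one_pos) ?_ (integrable_Phi_integrand hσ hγ₂ hC u₀) (meas_psi_integrand u₀ hγ₂) ?_
    (integrable_psiBound hσ C u₀) ?_
  · exact main.2
  · filter_upwards with u
    exact (((measurable_const.sub hγ₂).pow_const 2).mul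
      ((measurable_wphi σ).comp (measurable_id.sub_const u))).aestronglyMeasurable
  · filter_upwards with ζ
    intro u hu
    rw [Metric.mem_ball, Real.dist_eq] at hu
    exact psi_integrand_le hσ hC (le_of_lt hu) ζ
  · filter_upwards with ζ
    intro u hu
    have g1 : HasDerivAt (fun u => (u - γ₂ ζ)^2) (2*(u - γ₂ ζ)) u := by
      have := ((hasDerivAt_id u).sub_const (γ₂ ζ)).fun_pow 2
      simpa using this
    have g2 : HasDerivAt (fun u => wphi σ (ζ - u)) ((ζ - u)/σ^2 * wphi σ (ζ - u)) u := by
      have hw := hasDerivAt_wphi hσ (ζ - u)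
      have hin : HasDerivAt (fun u : ℝ => ζ - u) (-1) u := by
        simpa using (hasDerivAt_id u).const_sub ζ
      have := hw.comp u hin
      exact this.congr_deriv (by ring)
    have := g1.mul g2
    exact this.congr_deriv (by ring)

omit hσ hC in
lemma measurable_wPsi : Measurable (wPsi σ γ₂) := by
  have hsm : StronglyMeasurable (fun p : ℝ × ℝ =>
      (2*(p.1 - γ₂ p.2) + (p.1 - γ₂ p.2)^2 * ((p.2 - p.1)/σ^2)) * wphi σ (p.2 - p.1)) := by
    refine Measurable.stronglyMeasurable ?_
    exact (((measurable_fst.sub (hγ₂.comp measurable_snd)).const_mul 2).add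
      (((measurable_fst.sub (hγ₂.comp measurable_snd)).pow_const 2).mul
        ((measurable_snd.sub measurable_fst).div_const _))).mul
      ((measurable_wphi σ).comp (measurable_snd.sub measurable_fst))
  exact (hsm.integral_prod_right').measurable

lemma wPsi_le (u : ℝ) : |wPsi σ γ₂ u| ≤ 2*(|u|+C) + (|u|+C)^2/σ^2 * wM σ := by
  have hwint : Integrable (fun ζ => wphi σ (ζ - u)) := (integrable_wphi σ).comp_sub_right u
  have haint : Integrable (fun ζ => |ζ - u| * wphi σ (ζ - u)) :=
    (integrable_abs_wphi hσ).comp_sub_right u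
  have hg : Integrable (fun ζ => 2*(|u|+C) * wphi σ (ζ - u)
      + (|u|+C)^2/σ^2 * (|ζ - u| * wphi σ (ζ - u))) :=
    (hwint.const_mul _).add (haint.const_mul _)
  have hle : ∀ ζ, ‖(2*(u - γ₂ ζ) + (u - γ₂ ζ)^2 * ((ζ - u)/σ^2)) * wphi σ (ζ - u)‖
      ≤ 2*(|u|+C) * wphi σ (ζ - u) + (|u|+C)^2/σ^2 * (|ζ - u| * wphi σ (ζ - u)) := by
    intro ζ
    rw [Real.norm_eq_abs, abs_mul, abs_of_nonneg (wphi_nonneg _ _)]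
    have h1 : |u - γ₂ ζ| ≤ |u| + C := (abs_sub _ _).trans (by linarith [hC ζ])
    have hmain : |2*(u - γ₂ ζ) + (u - γ₂ ζ)^2 * ((ζ - u)/σ^2)|
        ≤ 2*(|u|+C) + (|u|+C)^2 * (|ζ - u|/σ^2) := by
      refine (abs_add_le _ _).trans ?_
      have e1 : |2*(u - γ₂ ζ)| ≤ 2*(|u|+C) := by rw [abs_mul]; simp; linarith
      have e2 : |(u - γ₂ ζ)^2 * ((ζ - u)/σ^2)| ≤ (|u|+C)^2 * (|ζ - u|/σ^2) := by
        rw [abs_mul, abs_div, abs_of_nonneg (by positivity : (0:ℝ) ≤ σ^2),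
          abs_of_nonneg (sq_nonneg _), ← sq_abs]
        exact mul_le_mul (pow_le_pow_left₀ (abs_nonneg _) h1 2) (le_refl _) (by positivity)
          (by positivity)
      linarith
    calc |2*(u - γ₂ ζ) + (u - γ₂ ζ)^2 * ((ζ - u)/σ^2)| * wphi σ (ζ - u)
        ≤ (2*(|u|+C) + (|u|+C)^2 * (|ζ - u|/σ^2)) * wphi σ (ζ - u) :=
          mul_le_mul_of_nonneg_right hmain (wphi_nonneg _ _)
      _ = _ := by ring
  have := norm_integral_le_of_norm_le hg (Filter.Eventually.of_forall hle)
  rw [← Real.norm_eq_abs]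
  refine this.trans (le_of_eq ?_)
  rw [integral_add (hwint.const_mul _) (haint.const_mul _), integral_const_mul, integral_const_mul,
    integral_sub_right_eq_self (fun z => wphi σ z) u, integral_wphi hσ,
    integral_sub_right_eq_self (fun z => |z| * wphi σ z) u]
  unfold wM; ring

omit hγ₂ hC in
lemma claimA (u : ℝ) :
    ∫ v, (u - γ₂ (u + v))^2 ∂(gaussianReal 0 ⟨σ ^ 2, sq_nonneg σ⟩) = wPhi σ γ₂ u := by
  rw [integral_gaussdens hσ]
  have h : ∀ z : ℝ, wphi σ z * (u - γ₂ (u + z))^2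
      = (fun ζ => (u - γ₂ ζ)^2 * wphi σ (ζ - u)) (u + z) := by
    intro z; simp only [add_sub_cancel_left]; ring
  simp_rw [h]
  exact integral_add_left_eq_self (fun ζ => (u - γ₂ ζ)^2 * wphi σ (ζ - u)) u

lemma wPhi_le (u : ℝ) : |wPhi σ γ₂ u| ≤ (|u|+C)^2 := by
  have hwint : Integrable (fun ζ => (|u|+C)^2 * wphi σ (ζ - u)) :=
    ((integrable_wphi σ).comp_sub_right u).const_mul _
  have hle : ∀ ζ, ‖(u - γ₂ ζ)^2 * wphi σ (ζ - u)‖ ≤ (|u|+C)^2 * wphi σ (ζ - u) := by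
    intro ζ
    rw [Real.norm_eq_abs, abs_mul, abs_of_nonneg (wphi_nonneg _ _), abs_of_nonneg (sq_nonneg _)]
    refine mul_le_mul_of_nonneg_right ?_ (wphi_nonneg _ _)
    have h1 : |u - γ₂ ζ| ≤ |u| + C := (abs_sub _ _).trans (by linarith [hC ζ])
    calc (u - γ₂ ζ)^2 = |u - γ₂ ζ|^2 := (sq_abs _).symm
      _ ≤ (|u|+C)^2 := pow_le_pow_left₀ (abs_nonneg _) h1 2
  have := norm_integral_le_of_norm_le hwint (Filter.Eventually.of_forall hle)
  rw [← Real.norm_eq_abs]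
  refine this.trans (le_of_eq ?_)
  rw [integral_const_mul, integral_sub_right_eq_self (fun z => wphi σ z) u, integral_wphi hσ,
    mul_one]

omit hσ hC in
lemma measurable_wPhi : Measurable (wPhi σ γ₂) := by
  have hsm : StronglyMeasurable (fun p : ℝ × ℝ => (p.1 - γ₂ p.2)^2 * wphi σ (p.2 - p.1)) := by
    refine Measurable.stronglyMeasurable ?_
    exact ((measurable_fst.sub (hγ₂.comp measurable_snd)).pow_const 2).mul
      ((measurable_wphi σ).comp (measurable_snd.sub measurable_fst))
  exact (hsm.integral_prod_right').measurable

end gamma3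

lemma sq3 (a b c : ℝ) : (a + b + c) ^ 2 ≤ 3 * a ^ 2 + 3 * b ^ 2 + 3 * c ^ 2 := by
  nlinarith [sq_nonneg (a - b), sq_nonneg (a - c), sq_nonneg (b - c)]

/-- First integral equation of the Witsenhausen counterexample: if `ḡ` minimizes the
payoff among bounded measurable perturbations (with `γ₂` fixed), then for `μ`-almost
every `x`,
`ḡ(x) = x − (1/k²) ∫ [((ζ−ḡ(x))/(2σ²))(ḡ(x)−γ₂(ζ))² + (ḡ(x)−γ₂(ζ))] φ_σ(ζ−ḡ(x)) dζ`. -/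
theorem stmt_14 (σ : ℝ) (hσ : 0 < σ) (k : ℝ) (hk : k ≠ 0)
    (μ : Measure ℝ) [IsProbabilityMeasure μ] (hμ2 : Integrable (fun x => x ^ 2) μ)
    (gb : ℝ → ℝ) (hgb : Measurable gb) (hgb2 : Integrable (fun x => gb x ^ 2) μ)
    (γ₂ : ℝ → ℝ) (hγ₂ : Measurable γ₂) (hγ₂b : ∃ C, ∀ y, |γ₂ y| ≤ C)
    (φ : ℝ → ℝ)
    (hφ : ∀ z, φ z = (1 / Real.sqrt (2 * Real.pi * σ ^ 2)) * Real.exp (-z ^ 2 / (2 * σ ^ 2)))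
    (hmin : ∀ δ : ℝ → ℝ, Measurable δ → (∃ C, ∀ x, |δ x| ≤ C) → ∀ t : ℝ,
      ∫ x, ∫ v, (k ^ 2 * (gb x - x) ^ 2 + (gb x - γ₂ (gb x + v)) ^ 2)
          ∂(gaussianReal 0 ⟨σ ^ 2, sq_nonneg σ⟩) ∂μ
        ≤ ∫ x, ∫ v, (k ^ 2 * (gb x + t * δ x - x) ^ 2
            + (gb x + t * δ x - γ₂ (gb x + t * δ x + v)) ^ 2)
          ∂(gaussianReal 0 ⟨σ ^ 2, sq_nonneg σ⟩) ∂μ) :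
    ∀ᵐ x ∂μ, gb x = x - (1 / k ^ 2) *
      ∫ ζ, (((ζ - gb x) / (2 * σ ^ 2)) * (gb x - γ₂ ζ) ^ 2 + (gb x - γ₂ ζ)) * φ (ζ - gb x) := by
  obtain ⟨C, hC⟩ := hγ₂b
  have hC0' : 0 ≤ C := hC0 hC
  have hσ2 : (0:ℝ) < σ ^ 2 := by positivity
  have hk2 : (0:ℝ) < k ^ 2 := by positivity
  have hwM := wM_nonneg hσ
  have habs : ∀ y : ℝ, |y| ≤ 1 + y ^ 2 := fun y => by nlinarith [sq_abs y, sq_nonneg (|y| - 1)]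
  set H : ℝ → ℝ := fun x => 2 * k ^ 2 * (gb x - x) + wPsi σ γ₂ (gb x) with hHdef
  have hHmeas : Measurable H :=
    ((hgb.sub measurable_id).const_mul _).add ((measurable_wPsi hγ₂).comp hgb)
  have inner_eq : ∀ u x : ℝ,
      ∫ v, (k ^ 2 * (u - x) ^ 2 + (u - γ₂ (u + v)) ^ 2)
        ∂(gaussianReal 0 ⟨σ ^ 2, sq_nonneg σ⟩) = k ^ 2 * (u - x) ^ 2 + wPhi σ γ₂ u := by
    intro u x
    have : IsProbabilityMeasure (gaussianReal 0 ⟨σ ^ 2, sq_nonneg σ⟩) :=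
      instIsProbabilityMeasureGaussianReal _ _
    have hint2 : Integrable (fun v => (u - γ₂ (u + v)) ^ 2)
        (gaussianReal 0 ⟨σ ^ 2, sq_nonneg σ⟩) := by
      refine (integrable_const ((|u| + C) ^ 2)).mono'
        ((measurable_const.sub (hγ₂.comp (measurable_const_add u))).pow_const 2).aestronglyMeasurable ?_
      filter_upwards with v
      rw [Real.norm_eq_abs, abs_of_nonneg (sq_nonneg _)]
      have h1 : |u - γ₂ (u + v)| ≤ |u| + C := (abs_sub _ _).trans (by linarith [hC (u + v)])
      calc (u - γ₂ (u + v)) ^ 2 = |u - γ₂ (u + v)| ^ 2 := (sq_abs _).symm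
        _ ≤ (|u| + C) ^ 2 := pow_le_pow_left₀ (abs_nonneg _) h1 2
    rw [integral_add (integrable_const _) hint2, integral_const, claimA hσ u]
    simp
  have key : ∀ δ : ℝ → ℝ, Measurable δ → ∀ Cδ : ℝ, (∀ x, |δ x| ≤ Cδ) →
      Integrable (fun x => H x * δ x) μ ∧ ∫ x, H x * δ x ∂μ = 0 := by
    intro δ hδm Cδ hδb
    have hCδ0 : 0 ≤ Cδ := le_trans (abs_nonneg _) (hδb 0)
    have hmeasF : ∀ t : ℝ, Measurable (fun x =>
        k ^ 2 * (gb x + t * δ x - x) ^ 2 + wPhi σ γ₂ (gb x + t * δ x)) := by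
      intro t
      have h1 : Measurable (fun x => gb x + t * δ x) := hgb.add (measurable_const.mul hδm)
      exact (((h1.sub measurable_id).pow_const 2).const_mul _).add
        ((measurable_wPhi hγ₂).comp h1)
    have hmeasF' : ∀ t : ℝ, Measurable (fun x =>
        (2 * k ^ 2 * (gb x + t * δ x - x) + wPsi σ γ₂ (gb x + t * δ x)) * δ x) := by
      intro t
      have h1 : Measurable (fun x => gb x + t * δ x) := hgb.add (measurable_const.mul hδm)
      exact (((h1.sub measurable_id).const_mul _).add ((measurable_wPsi hγ₂).comp h1)).mul hδm
    set F : ℝ → ℝ → ℝ := fun t x =>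
      k ^ 2 * (gb x + t * δ x - x) ^ 2 + wPhi σ γ₂ (gb x + t * δ x) with hF
    set F' : ℝ → ℝ → ℝ := fun t x =>
      (2 * k ^ 2 * (gb x + t * δ x - x) + wPsi σ γ₂ (gb x + t * δ x)) * δ x with hF'
    set a0 : ℝ := 2 * k ^ 2 * (2 + Cδ) + 2 * (1 + Cδ + C) + (3 * Cδ ^ 2 + 3 * C ^ 2) / σ ^ 2 * wM σ
      with ha0
    set a1 : ℝ := 2 * k ^ 2 + 2 + 3 / σ ^ 2 * wM σ with ha1
    set a2 : ℝ := 2 * k ^ 2 with ha2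
    have hbound_int : Integrable (fun x => Cδ * (a0 + a1 * gb x ^ 2 + a2 * x ^ 2)) μ :=
      (((integrable_const a0).add (hgb2.const_mul a1)).add (hμ2.const_mul a2)).const_mul Cδ
    have h1side : ∀ᶠ t in nhds (0:ℝ), AEStronglyMeasurable (F t) μ := by
      filter_upwards with t
      exact (hmeasF t).aestronglyMeasurable
    have h2side : Integrable (F 0) μ := by
      refine (((integrable_const ((3:ℝ) * k ^ 2 * Cδ ^ 2 + 3 * Cδ ^ 2 + 3 * C ^ 2)).add
        (hgb2.const_mul (3 * k ^ 2 + 3))).add (hμ2.const_mul (3 * k ^ 2))).mono'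
        (hmeasF 0).aestronglyMeasurable ?_
      filter_upwards with x
      simp only [hF, Pi.add_apply]
      have hPhi := wPhi_le hσ hγ₂ hC (gb x + 0 * δ x)
      have hsq1 : (gb x + 0 * δ x - x) ^ 2 ≤ 3 * gb x ^ 2 + 3 * Cδ ^ 2 + 3 * x ^ 2 := by
        linarith only [sq3 (gb x) 0 (-x), sq_nonneg Cδ, sq_nonneg (0 * δ x)]
      have hsq2 : (|gb x + 0 * δ x| + C) ^ 2 ≤ 3 * gb x ^ 2 + 3 * Cδ ^ 2 + 3 * C ^ 2 := by
        simp only [zero_mul, add_zero]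
        linarith only [sq3 (|gb x|) 0 C, (sq_abs (gb x)).le, (sq_abs (gb x)).ge, sq_nonneg Cδ]
      have hPhi_nonneg : 0 ≤ wPhi σ γ₂ (gb x + 0 * δ x) :=
        integral_nonneg fun ζ => mul_nonneg (sq_nonneg _) (wphi_nonneg _ _)
      rw [Real.norm_eq_abs,
        abs_of_nonneg (by positivity : (0:ℝ) ≤ k ^ 2 * (gb x + 0 * δ x - x) ^ 2 + wPhi σ γ₂ (gb x + 0 * δ x))]
      have hP2 := (le_abs_self _).trans hPhi
      have hmul := mul_le_mul_of_nonneg_left hsq1 hk2.le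
      linarith only [hmul, hP2, hsq2]
    have h3side : AEStronglyMeasurable (F' 0) μ := (hmeasF' 0).aestronglyMeasurable
    have h4side : ∀ᵐ a ∂μ, ∀ t ∈ Metric.ball (0:ℝ) 1,
        ‖F' t a‖ ≤ Cδ * (a0 + a1 * gb a ^ 2 + a2 * a ^ 2) := by
      filter_upwards with x
      intro t ht
      rw [Metric.mem_ball, Real.dist_eq, sub_zero] at ht
      set u : ℝ := gb x + t * δ x with hu
      have htd : |t * δ x| ≤ Cδ := by
        rw [abs_mul]
        calc |t| * |δ x| ≤ 1 * Cδ := mul_le_mul ht.le (hδb x) (abs_nonneg _) zero_le_one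
          _ = Cδ := one_mul _
      have t3 : |u| ≤ |gb x| + Cδ := (abs_add_le _ _).trans (by linarith)
      have t1 : |u - x| ≤ |gb x| + Cδ + |x| :=
        (abs_sub _ _).trans (by linarith [abs_add_le (gb x) (t * δ x)])
      have t2 := wPsi_le hσ hγ₂ hC u
      have sqle : (|u| + C) ^ 2 ≤ 3 * gb x ^ 2 + 3 * Cδ ^ 2 + 3 * C ^ 2 := by
        have hs1 : |u| + C ≤ |gb x| + Cδ + C := by linarith only [t3]
        have hs2 := pow_le_pow_left₀ (by positivity : (0:ℝ) ≤ |u| + C) hs1 2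
        linarith only [hs2, sq3 (|gb x|) Cδ C, (sq_abs (gb x)).le, (sq_abs (gb x)).ge]
      have t4 : (|u| + C) ^ 2 / σ ^ 2 * wM σ
          ≤ (3 * gb x ^ 2 + 3 * Cδ ^ 2 + 3 * C ^ 2) / σ ^ 2 * wM σ := by gcongr
      have hinner : |2 * k ^ 2 * (u - x) + wPsi σ γ₂ u| ≤ a0 + a1 * gb x ^ 2 + a2 * x ^ 2 := by
        refine (abs_add_le _ _).trans ?_
        have e1 : |2 * k ^ 2 * (u - x)| ≤ 2 * k ^ 2 * (|gb x| + Cδ + |x|) := by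
          rw [abs_mul, abs_of_nonneg (by positivity : (0:ℝ) ≤ 2 * k ^ 2)]
          exact mul_le_mul_of_nonneg_left t1 (by positivity)
        have g1 := habs (gb x)
        have g2 := habs x
        have g3 : 2 * (|u| + C) ≤ 2 * ((1 + gb x ^ 2) + Cδ + C) := by
          linarith only [t3, g1]
        have e1' : 2 * k ^ 2 * (|gb x| + Cδ + |x|)
            ≤ 2 * k ^ 2 * ((1 + gb x ^ 2) + Cδ + (1 + x ^ 2)) := by
          refine mul_le_mul_of_nonneg_left (by linarith only [g1, g2]) (by positivity)
        rw [ha0, ha1, ha2]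
        have hdiv : (3 * gb x ^ 2 + 3 * Cδ ^ 2 + 3 * C ^ 2) / σ ^ 2 * wM σ
            = (3 * Cδ ^ 2 + 3 * C ^ 2) / σ ^ 2 * wM σ + 3 / σ ^ 2 * wM σ * gb x ^ 2 := by
          field_simp; ring
        have t2' : |wPsi σ γ₂ u|
            ≤ 2 * ((1 + gb x ^ 2) + Cδ + C) + (3 * gb x ^ 2 + 3 * Cδ ^ 2 + 3 * C ^ 2) / σ ^ 2 * wM σ := by
          linarith only [t2, g3, t4]
        rw [hdiv] at t2'
        calc |2 * k ^ 2 * (u - x)| + |wPsi σ γ₂ u|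
            ≤ 2 * k ^ 2 * ((1 + gb x ^ 2) + Cδ + (1 + x ^ 2))
              + (2 * ((1 + gb x ^ 2) + Cδ + C)
                + ((3 * Cδ ^ 2 + 3 * C ^ 2) / σ ^ 2 * wM σ + 3 / σ ^ 2 * wM σ * gb x ^ 2)) := by
              linarith only [e1.trans e1', t2']
          _ = _ := by ring
      calc ‖F' t x‖
          = |2 * k ^ 2 * (u - x) + wPsi σ γ₂ u| * |δ x| := by
            simp only [hF', Real.norm_eq_abs, hu]; rw [abs_mul]
        _ ≤ (a0 + a1 * gb x ^ 2 + a2 * x ^ 2) * Cδ := by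
            refine mul_le_mul hinner (hδb x) (abs_nonneg _) ?_
            exact (abs_nonneg _).trans hinner
        _ = Cδ * (a0 + a1 * gb x ^ 2 + a2 * x ^ 2) := by ring
    have h5side : ∀ᵐ a ∂μ, ∀ t ∈ Metric.ball (0:ℝ) 1, HasDerivAt (F · a) (F' t a) t := by
      filter_upwards with x
      intro t ht
      have inner : HasDerivAt (fun u => k ^ 2 * (u - x) ^ 2 + wPhi σ γ₂ u)
          (2 * k ^ 2 * (gb x + t * δ x - x) + wPsi σ γ₂ (gb x + t * δ x)) (gb x + t * δ x) := by
        have d1 : HasDerivAt (fun u : ℝ => k ^ 2 * (u - x) ^ 2) (2 * k ^ 2 * (gb x + t * δ x - x))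
            (gb x + t * δ x) := by
          have h0 : HasDerivAt (fun u : ℝ => (u - x) ^ 2) (2 * (gb x + t * δ x - x))
              (gb x + t * δ x) := by
            have := ((hasDerivAt_id (gb x + t * δ x)).sub_const x).pow 2
            simp at this
            exact this
          have h1 := h0.const_mul (k ^ 2)
          exact h1.congr_deriv (by ring)
        exact d1.add (hasDerivAt_wPhi hσ hγ₂ hC _)
      have affine : HasDerivAt (fun t : ℝ => gb x + t * δ x) (δ x) t := by
        simpa using ((hasDerivAt_id t).mul_const (δ x)).const_add (gb x)
      exact inner.comp t affine
    obtain ⟨hint, hderiv⟩ := hasDerivAt_integral_of_dominated_loc_of_deriv_le (μ := μ) (F := F)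
      (F' := F') (x₀ := 0) (bound := fun x => Cδ * (a0 + a1 * gb x ^ 2 + a2 * x ^ 2)) (s := Metric.ball 0 1)
      (Metric.ball_mem_nhds 0 one_pos) h1side h2side h3side h4side hbound_int h5side
    have hF'0 : F' 0 = fun x => H x * δ x := by
      funext x; simp only [hF', hHdef, zero_mul, add_zero]
    simp only [hF'0] at hint hderiv
    refine ⟨hint, ?_⟩
    have hmin' := hmin δ hδm ⟨Cδ, hδb⟩
    have hJmin : IsLocalMin (fun t => ∫ x, F t x ∂μ) 0 := by
      refine Filter.Eventually.of_forall fun t => ?_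
      have h0 := hmin' t
      simp_rw [inner_eq] at h0
      have e0 : ∀ x : ℝ, k ^ 2 * (gb x - x) ^ 2 + wPhi σ γ₂ (gb x) = F 0 x := by
        intro x; simp [hF]
      simp_rw [e0] at h0
      exact h0
    exact hJmin.hasDerivAt_eq_zero hderiv
  set δ : ℝ → ℝ := fun x => if 0 ≤ H x then 1 else -1 with hδdef
  have hδm : Measurable δ := Measurable.ite (measurableSet_le measurable_const hHmeas)
    measurable_const measurable_const
  have hδb : ∀ x, |δ x| ≤ 1 := by
    intro x; simp only [hδdef]; split <;> simp
  obtain ⟨hint, hzero⟩ := key δ hδm 1 hδb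
  have hHd : ∀ x, H x * δ x = |H x| := by
    intro x; simp only [hδdef]
    split
    · rw [mul_one, abs_of_nonneg ‹_›]
    · rw [abs_of_neg (lt_of_not_ge ‹_›)]; ring
  simp_rw [hHd] at hint hzero
  have hH0 : (fun x => |H x|) =ᵐ[μ] 0 :=
    (integral_eq_zero_iff_of_nonneg (fun x => abs_nonneg _) hint).mp hzero
  have hφw : φ = wphi σ := funext fun z => by rw [hφ, wphi_eq]
  filter_upwards [hH0] with x hx
  have hHx : H x = 0 := abs_eq_zero.mp hx
  have hPsi2 : wPsi σ γ₂ (gb x) = 2 * ∫ ζ,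
      (((ζ - gb x) / (2 * σ ^ 2)) * (gb x - γ₂ ζ) ^ 2 + (gb x - γ₂ ζ)) * φ (ζ - gb x) := by
    rw [hφw, wPsi, ← integral_const_mul]
    congr 1; funext ζ
    field_simp
    ring
  rw [hHdef] at hHx
  simp only at hHx
  rw [hPsi2] at hHx
  have hk2' : k ^ 2 ≠ 0 := ne_of_gt hk2
  have hI : (∫ ζ, (((ζ - gb x) / (2 * σ ^ 2)) * (gb x - γ₂ ζ) ^ 2 + (gb x - γ₂ ζ)) * φ (ζ - gb x))
      = -(k ^ 2 * (gb x - x)) := by linarith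
  rw [hI]
  field_simp
  ring
end
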